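/- arXiv:1509.05957 — 6 statements merged into one kernel-verified Lean document; each statement's English description precedes it below -/
import Mathlib

section
/- For every straight-line program (an acyclic context-free grammar where every variable has exactly one production) of size m (the total length of all right-hand sides), the length of the unique string it produces is at most 3^(m/3), and in particular at most 2^m. -/
/-- A straight-line program: an acyclic context-free grammar in which every
variable has exactly one production. -/
structure SLP (V Alph : Type) [Fintype V] where
  /-- the unique right-hand side of each variable -/
  rhs : V → List (V ⊕ Alph)
  /-- the start variable -/
  start : V
  /-- a ranking witnessing acyclicity (a linear order compatible with occurrence) -/
  rank : V → ℕ
  acyclic : ∀ X Y : V, Sum.inl Y ∈ rhs X → rank Y < rank X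

/-- The size of an SLP: the total length of all right-hand sides. -/
def SLP.size {V Alph : Type} [Fintype V] (G : SLP V Alph) : ℕ :=
  ∑ X : V, (G.rhs X).length

/-- `val` is the (unique) evaluation of the SLP: each variable derives the
string obtained by expanding its right-hand side. -/
def SLP.IsEval {V Alph : Type} [Fintype V] (G : SLP V Alph) (val : V → List Alph) : Prop :=
  ∀ X : V, val X = ((G.rhs X).map (Sum.elim val (fun t => [t]))).flatten

lemma cube_le_three_pow : ∀ n : ℕ, n ^ 3 ≤ 3 ^ n
  | 0 => by norm_num
  | 1 => by norm_num
  | 2 => by norm_num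
  | 3 => by norm_num
  | (n + 4) => by
      have ih := cube_le_three_pow (n + 3)
      have h : (n + 4) ^ 3 ≤ 3 * (n + 3) ^ 3 := by ring_nf; nlinarith [n.zero_le]
      calc (n + 4) ^ 3 ≤ 3 * (n + 3) ^ 3 := h
        _ ≤ 3 * 3 ^ (n + 3) := Nat.mul_le_mul_left 3 ih
        _ = 3 ^ (n + 4) := by ring

lemma max_cube_le (n : ℕ) : (max 1 n) ^ 3 ≤ 3 ^ n := by
  rcases Nat.eq_zero_or_pos n with h | h
  · simp [h]
  · rw [max_eq_right h]; exact cube_le_three_pow n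

lemma key {V Alph : Type} [Fintype V] (G : SLP V Alph)
    (val : V → List Alph) (hval : G.IsEval val) :
    ∀ n : ℕ, ∀ X : V, G.rank X ≤ n →
      (val X).length ≤ ∏ Y ∈ Finset.univ.filter (fun Y => G.rank Y ≤ n),
        max 1 (G.rhs Y).length := by
  intro n
  induction n using Nat.strong_induction_on with
  | _ n ih =>
    intro X hX
    classical
    set S := Finset.univ.filter (fun Y => G.rank Y ≤ n) with hS
    have hXS : X ∈ S := by simp [hS, hX]
    set P := ∏ Y ∈ S.erase X, max 1 (G.rhs Y).length with hP
    have hT : ∀ s ∈ G.rhs X, (Sum.elim val (fun t => [t]) s).length ≤ P := by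
      intro s hs
      cases s with
      | inr t =>
          simpa using Finset.one_le_prod' (fun Y _ => le_max_left 1 (G.rhs Y).length)
      | inl Y =>
          have hYX := G.acyclic X Y hs
          have h1 : G.rank Y < n := lt_of_lt_of_le hYX hX
          have h2 := ih (G.rank Y) h1 Y le_rfl
          refine le_trans h2 (Finset.prod_le_prod_of_subset_of_one_le' ?_ ?_)
          · intro Z hZ
            simp only [Finset.mem_filter, Finset.mem_univ, true_and] at hZ
            have hZX : Z ≠ X := by
              intro h; subst h; omega
            simp only [Finset.mem_erase, hS, Finset.mem_filter, Finset.mem_univ, true_and]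
            exact ⟨hZX, by omega⟩
          · intro Z _ _; exact le_max_left 1 _
    have hlen : (val X).length = ((G.rhs X).map
        (fun s => (Sum.elim val (fun t => [t]) s).length)).sum := by
      rw [hval X, List.length_flatten, List.map_map]
      rfl
    have hsum : ((G.rhs X).map
        (fun s => (Sum.elim val (fun t => [t]) s).length)).sum ≤ (G.rhs X).length * P := by
      have := List.sum_le_card_nsmul ((G.rhs X).map
        (fun s => (Sum.elim val (fun t => [t]) s).length)) P ?_
      · simpa [smul_eq_mul] using this
      · intro x hx
        simp only [List.mem_map] at hx
        obtain ⟨s, hs, rfl⟩ := hx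
        exact hT s hs
    calc (val X).length ≤ (G.rhs X).length * P := hlen ▸ hsum
      _ ≤ max 1 (G.rhs X).length * P := Nat.mul_le_mul_right P (le_max_right 1 _)
      _ = ∏ Y ∈ S, max 1 (G.rhs Y).length := Finset.mul_prod_erase S (fun Y => max 1 (G.rhs Y).length) hXS

/-- The string produced by an SLP of size m has length at most 3^(m/3) ≤ 2^m. -/
theorem slp_length_bound (V Alph : Type) [Fintype V] (G : SLP V Alph)
    (val : V → List Alph) (hval : G.IsEval val) :
    ((val G.start).length : ℝ) ≤ 3 ^ ((G.size : ℝ) / 3) ∧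
    (val G.start).length ≤ 2 ^ G.size := by
  classical
  set Pn := ∏ Y : V, max 1 (G.rhs Y).length with hPn
  have hL : (val G.start).length ≤ Pn := by
    refine le_trans (key G val hval (G.rank G.start) G.start le_rfl) ?_
    refine Finset.prod_le_prod_of_subset_of_one_le' (Finset.filter_subset _ _) ?_
    intro Z _ _; exact le_max_left 1 _
  constructor
  · -- real bound
    have hcube : Pn ^ 3 ≤ 3 ^ G.size := by
      calc Pn ^ 3 = ∏ Y : V, (max 1 (G.rhs Y).length) ^ 3 := by
            rw [hPn, ← Finset.prod_pow]
        _ ≤ ∏ Y : V, 3 ^ (G.rhs Y).length :=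
            Finset.prod_le_prod' (fun Y _ => max_cube_le _)
        _ = 3 ^ G.size := Finset.prod_pow_eq_pow_sum _ _ _
    have h3 : ((3 : ℝ) ^ ((G.size : ℝ) / 3)) ^ (3 : ℕ) = (3 : ℝ) ^ G.size := by
      rw [← Real.rpow_natCast ((3:ℝ) ^ ((G.size:ℝ)/3)) 3, ← Real.rpow_mul (by norm_num)]
      push_cast
      rw [div_mul_cancel₀ _ (by norm_num : (3:ℝ) ≠ 0), Real.rpow_natCast]
    have hPnR : (Pn : ℝ) ≤ (3 : ℝ) ^ ((G.size : ℝ) / 3) := by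
      have h1 : ((Pn : ℝ)) ^ (3:ℕ) ≤ ((3:ℝ) ^ ((G.size:ℝ)/3)) ^ (3:ℕ) := by
        rw [h3]
        exact_mod_cast hcube
      have hb : (0:ℝ) ≤ (3:ℝ) ^ ((G.size:ℝ)/3) := Real.rpow_nonneg (by norm_num) _
      exact le_of_pow_le_pow_left₀ (by norm_num) hb h1
    calc ((val G.start).length : ℝ) ≤ (Pn : ℝ) := by exact_mod_cast hL
      _ ≤ _ := hPnR
  · -- 2^m bound
    refine le_trans hL ?_
    calc Pn ≤ ∏ Y : V, 2 ^ (G.rhs Y).length := by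
          refine Finset.prod_le_prod' (fun Y _ => ?_)
          rcases Nat.eq_zero_or_pos (G.rhs Y).length with h | h
          · simp [h]
          · rw [max_eq_right h]
            exact le_of_lt Nat.lt_two_pow_self
      _ = 2 ^ G.size := Finset.prod_pow_eq_pow_sum _ _ _
end

section
/- Levi's lemma for trace monoids: in the trace monoid M(A,I), for traces u₁,...,u_m, v₁,...,v_n, the equality u₁u₂⋯u_m = v₁v₂⋯v_n holds if and only if there exist traces w_{i,j} (1 ≤ i ≤ m, 1 ≤ j ≤ n) such that u_i = w_{i,1}w_{i,2}⋯w_{i,n} for each i, v_j = w_{1,j}w_{2,j}⋯w_{m,j} for each j, and w_{i,j} commutes letterwise with w_{k,ℓ} (every letter of one is independent of every letter of the other) whenever i < k and j > ℓ. -/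
/-- The commutation relation on words generated by an independence relation. -/
def traceRel (A : Type) (I : A → A → Prop) : FreeMonoid A → FreeMonoid A → Prop :=
  fun x y => ∃ a b, I a b ∧ x = FreeMonoid.of a * FreeMonoid.of b ∧ y = FreeMonoid.of b * FreeMonoid.of a

/-- The trace congruence ≡_I. -/
def traceCon (A : Type) (I : A → A → Prop) : Con (FreeMonoid A) := conGen (traceRel A I)

/-- The trace monoid M(A,I). -/
abbrev Trace (A : Type) (I : A → A → Prop) := (traceCon A I).Quotient

/-- The trace represented by a word. -/
def trc (A : Type) (I : A → A → Prop) (w : FreeMonoid A) : Trace A I := (traceCon A I).mk' w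

/-- s I t: every letter of s is independent of every letter of t. -/
def TraceIndep (A : Type) (I : A → A → Prop) (s t : Trace A I) : Prop :=
  ∀ w w' : FreeMonoid A, s = trc A I w → t = trc A I w' →
    ∀ a ∈ w.toList, ∀ b ∈ w'.toList, I a b

/-- A trace is connected if it has no nontrivial factorization into independent factors. -/
def TraceConnected (A : Type) (I : A → A → Prop) (t : Trace A I) : Prop :=
  ∀ u v : Trace A I, t = u * v → TraceIndep A I u v → u = 1 ∨ v = 1

/-- The set of prefixes of a trace. -/
def tracePrefixes (A : Type) (I : A → A → Prop) (t : Trace A I) : Set (Trace A I) :=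
  {p | ∃ q, t = p * q}

namespace LeviAux

variable {A : Type} {I : A → A → Prop}

/-- One swap of two adjacent independent letters. -/
def Step (I : A → A → Prop) (x y : List A) : Prop :=
  ∃ (l r : List A) (a b : A), I a b ∧ x = l ++ a :: b :: r ∧ y = l ++ b :: a :: r

/-- Chains of swaps. -/
abbrev Steps (I : A → A → Prop) : List A → List A → Prop := Relation.ReflTransGen (Step I)

theorem Step.symm (hsym : ∀ a b, I a b → I b a) {x y : List A} (h : Step I x y) : Step I y x := by
  obtain ⟨l, r, a, b, hI, hx, hy⟩ := h
  exact ⟨l, r, b, a, hsym _ _ hI, hy, hx⟩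

theorem Steps.symm (hsym : ∀ a b, I a b → I b a) {x y : List A} (h : Steps I x y) :
    Steps I y x :=
  (@Relation.ReflTransGen.symmetric _ (Step I) ⟨fun _ _ h => Step.symm hsym h⟩).symm _ _ h

theorem Step.append_left {x y : List A} (z : List A) (h : Step I x y) :
    Step I (z ++ x) (z ++ y) := by
  obtain ⟨l, r, a, b, hI, hx, hy⟩ := h
  exact ⟨z ++ l, r, a, b, hI, by simp [hx], by simp [hy]⟩

theorem Step.append_right {x y : List A} (z : List A) (h : Step I x y) :
    Step I (x ++ z) (y ++ z) := by
  obtain ⟨l, r, a, b, hI, hx, hy⟩ := h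
  exact ⟨l, r ++ z, a, b, hI, by simp [hx], by simp [hy]⟩

theorem Steps.append_left {x y : List A} (z : List A) (h : Steps I x y) :
    Steps I (z ++ x) (z ++ y) :=
  Relation.ReflTransGen.lift (z ++ ·) (fun _ _ h => h.append_left z) _ _ h

theorem Steps.append_right {x y : List A} (z : List A) (h : Steps I x y) :
    Steps I (x ++ z) (y ++ z) :=
  Relation.ReflTransGen.lift (· ++ z) (fun _ _ h => h.append_right z) _ _ h

theorem Steps.append {x y x' y' : List A} (h : Steps I x y) (h' : Steps I x' y') :
    Steps I (x ++ x') (y ++ y') :=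
  (h.append_right x').trans (Steps.append_left y h')

theorem Step.perm {x y : List A} (h : Step I x y) : x.Perm y := by
  obtain ⟨l, r, a, b, _, hx, hy⟩ := h
  subst hx; subst hy
  exact List.Perm.append_left l (List.Perm.swap b a r)

theorem Steps.perm {x y : List A} (h : Steps I x y) : x.Perm y := by
  induction h with
  | refl => exact List.Perm.refl _
  | tail _ h2 ih => exact ih.trans h2.perm

/-- The congruence on the free monoid given by chains of swaps. -/
def stepsCon (I : A → A → Prop) (hsym : ∀ a b, I a b → I b a) : Con (FreeMonoid A) :=
  { r := fun x y => Steps I x.toList y.toList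
    iseqv := ⟨fun _ => Relation.ReflTransGen.refl,
      fun h => Steps.symm hsym h, fun h h' => h.trans h'⟩
    mul' := fun h h' => by
      simpa [FreeMonoid.toList_mul] using Steps.append h h' }

theorem steps_of_traceCon (hsym : ∀ a b, I a b → I b a) {x y : FreeMonoid A}
    (h : traceCon A I x y) : Steps I x.toList y.toList := by
  have hle : traceCon A I ≤ stepsCon I hsym := by
    apply Con.conGen_le.2
    rintro x y ⟨a, b, hI, rfl, rfl⟩
    exact Relation.ReflTransGen.single ⟨[], [], a, b, hI, rfl, rfl⟩
  exact hle h

theorem traceCon_of_steps : ∀ {l l' : List A}, Steps I l l' →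
    traceCon A I (FreeMonoid.ofList l) (FreeMonoid.ofList l') := by
  intro l l' h
  induction h with
  | refl => exact (traceCon A I).refl _
  | tail _ h2 ih =>
    refine (traceCon A I).trans ih ?_
    obtain ⟨lft, r, a, b, hI, hx, hy⟩ := h2
    subst hx; subst hy
    have h1 : traceCon A I (FreeMonoid.of a * FreeMonoid.of b)
        (FreeMonoid.of b * FreeMonoid.of a) :=
      ConGen.Rel.of _ _ ⟨a, b, hI, rfl, rfl⟩
    have h2 := ((traceCon A I).refl (FreeMonoid.ofList lft)).mul
      (h1.mul ((traceCon A I).refl (FreeMonoid.ofList r)))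
    simp [FreeMonoid.ofList_append, FreeMonoid.ofList_cons, mul_assoc] at h2 ⊢
    exact h2

theorem trc_eq_iff {x y : FreeMonoid A} : trc A I x = trc A I y ↔ traceCon A I x y :=
  Con.eq _

theorem trc_mul (x y : FreeMonoid A) : trc A I (x * y) = trc A I x * trc A I y :=
  map_mul _ _ _

/-- The trace of a list. -/
def trcL (I : A → A → Prop) (l : List A) : Trace A I := trc A I (FreeMonoid.ofList l)

theorem trcL_append (l l' : List A) : trcL I (l ++ l') = trcL I l * trcL I l' := by
  rw [trcL, FreeMonoid.ofList_append, trc_mul]; rfl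

theorem trcL_nil : trcL I ([] : List A) = 1 :=
  map_one (traceCon A I).mk'

theorem trcL_eq_iff (hsym : ∀ a b, I a b → I b a) {l l' : List A} :
    trcL I l = trcL I l' ↔ Steps I l l' := by
  rw [trcL, trcL, trc_eq_iff]
  constructor
  · intro h; exact steps_of_traceCon hsym h
  · exact traceCon_of_steps

theorem exists_rep (t : Trace A I) : ∃ l : List A, t = trcL I l := by
  obtain ⟨w, hw⟩ := Con.mk'_surjective (c := traceCon A I) t
  exact ⟨w.toList, by rw [← hw]; rfl⟩

theorem mul_eq_one (hsym : ∀ a b, I a b → I b a) {s t : Trace A I} (h : s * t = 1) :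
    s = 1 ∧ t = 1 := by
  obtain ⟨x, rfl⟩ := exists_rep s
  obtain ⟨y, rfl⟩ := exists_rep t
  rw [← trcL_append, show (1 : Trace A I) = trcL I [] from trcL_nil.symm] at h
  have hp := ((trcL_eq_iff hsym).1 h).perm
  have hxy : x ++ y = [] := List.Perm.eq_nil hp
  obtain ⟨hx, hy⟩ := List.append_eq_nil_iff.1 hxy
  subst hx; subst hy
  exact ⟨trcL_nil, trcL_nil⟩

theorem traceIndep_trcL_iff (hsym : ∀ a b, I a b → I b a) {p q : List A} :
    TraceIndep A I (trcL I p) (trcL I q) ↔ ∀ a ∈ p, ∀ b ∈ q, I a b := by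
  constructor
  · intro h
    simpa using h (FreeMonoid.ofList p) (FreeMonoid.ofList q) rfl rfl
  · intro h w w' hw hw' a ha b hb
    have h1 : Steps I p w.toList := by
      apply steps_of_traceCon hsym
      exact trc_eq_iff.1 hw
    have h2 : Steps I q w'.toList := by
      apply steps_of_traceCon hsym
      exact trc_eq_iff.1 hw'
    exact h a (h1.perm.mem_iff.2 ha) b (h2.perm.mem_iff.2 hb)

theorem TraceIndep.mul_left {s₁ s₂ t : Trace A I} (h : TraceIndep A I (s₁ * s₂) t) :
    TraceIndep A I s₁ t := by
  intro w w' hw hw' a ha b hb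
  obtain ⟨l₂, hl₂⟩ := exists_rep s₂
  refine h (w * FreeMonoid.ofList l₂) w' ?_ hw' a ?_ b hb
  · rw [hw, hl₂, trc_mul]; rfl
  · simp [FreeMonoid.toList_mul, ha]

theorem TraceIndep.mul_right {s₁ s₂ t : Trace A I} (h : TraceIndep A I (s₁ * s₂) t) :
    TraceIndep A I s₂ t := by
  intro w w' hw hw' a ha b hb
  obtain ⟨l₁, hl₁⟩ := exists_rep s₁
  refine h (FreeMonoid.ofList l₁ * w) w' ?_ hw' a ?_ b hb
  · rw [hw, hl₁, trc_mul]; rfl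
  · simp [FreeMonoid.toList_mul, ha]

theorem TraceIndep.mul_left' {s t₁ t₂ : Trace A I} (h : TraceIndep A I s (t₁ * t₂)) :
    TraceIndep A I s t₁ := by
  intro w w' hw hw' a ha b hb
  obtain ⟨l₂, hl₂⟩ := exists_rep t₂
  refine h w (w' * FreeMonoid.ofList l₂) hw ?_ a ha b ?_
  · rw [hw', hl₂, trc_mul]; rfl
  · simp [FreeMonoid.toList_mul, hb]

theorem TraceIndep.mul_right' {s t₁ t₂ : Trace A I} (h : TraceIndep A I s (t₁ * t₂)) :
    TraceIndep A I s t₂ := by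
  intro w w' hw hw' a ha b hb
  obtain ⟨l₁, hl₁⟩ := exists_rep t₁
  refine h w (FreeMonoid.ofList l₁ * w') hw ?_ a ha b ?_
  · rw [hw', hl₁, trc_mul]; rfl
  · simp [FreeMonoid.toList_mul, hb]

theorem TraceIndep.of_mem_prod_left {L : List (Trace A I)} {t e : Trace A I}
    (h : TraceIndep A I L.prod t) (he : e ∈ L) : TraceIndep A I e t := by
  induction L with
  | nil => cases he
  | cons hd tl ih =>
    rw [List.prod_cons] at h
    rcases List.mem_cons.1 he with rfl | he'
    · exact TraceIndep.mul_left h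
    · exact ih (TraceIndep.mul_right h) he'

theorem TraceIndep.of_mem_prod_right {L : List (Trace A I)} {s e : Trace A I}
    (h : TraceIndep A I s L.prod) (he : e ∈ L) : TraceIndep A I s e := by
  induction L with
  | nil => cases he
  | cons hd tl ih =>
    rw [List.prod_cons] at h
    rcases List.mem_cons.1 he with rfl | he'
    · exact TraceIndep.mul_left' h
    · exact ih (TraceIndep.mul_right' h) he'

theorem steps_cons_middle {a : A} {p : List A} (z : List A) (h : ∀ b ∈ p, I a b) :
    Steps I (a :: (p ++ z)) (p ++ a :: z) := by
  induction p with
  | nil => exact Relation.ReflTransGen.refl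
  | cons b p' ih =>
    have hstep : Step I (a :: b :: (p' ++ z)) (b :: a :: (p' ++ z)) :=
      ⟨[], p' ++ z, a, b, h b (List.mem_cons_self), rfl, rfl⟩
    refine Relation.ReflTransGen.head hstep ?_
    have := (ih (fun b hb => h b (List.mem_cons_of_mem _ hb))).append_left [b]
    simpa using this

theorem steps_append_comm {x y : List A} (h : ∀ a ∈ x, ∀ b ∈ y, I a b) :
    Steps I (x ++ y) (y ++ x) := by
  induction x with
  | nil =>
    simp only [List.nil_append, List.append_nil]
    exact Relation.ReflTransGen.refl
  | cons a x' ih =>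
    have h1 : Steps I (x' ++ y) (y ++ x') :=
      ih (fun a ha => h a (List.mem_cons_of_mem _ ha))
    have h2 : Steps I (a :: (x' ++ y)) (a :: (y ++ x')) := by
      simpa using h1.append_left [a]
    exact h2.trans (steps_cons_middle x' (h a (List.mem_cons_self)))

theorem TraceIndep.commute (hsym : ∀ a b, I a b → I b a) {s t : Trace A I}
    (h : TraceIndep A I s t) : Commute s t := by
  obtain ⟨x, rfl⟩ := exists_rep s
  obtain ⟨y, rfl⟩ := exists_rep t
  have hl := (traceIndep_trcL_iff hsym).1 h
  show trcL I x * trcL I y = trcL I y * trcL I x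
  rw [← trcL_append, ← trcL_append]
  exact (trcL_eq_iff hsym).2 (steps_append_comm hl)

/-- Locating an occurrence of `a` relative to an adjacent swap. -/
theorem split_lemma {p q l r : List A} {a c d : A}
    (h : p ++ a :: q = l ++ c :: d :: r) :
    (∃ r₁, p = l ++ c :: d :: r₁ ∧ r = r₁ ++ a :: q) ∨
    (p = l ++ [c] ∧ a = d ∧ q = r) ∨
    (l = p ∧ c = a ∧ q = d :: r) ∨
    (∃ q₁, l = p ++ a :: q₁ ∧ q = q₁ ++ c :: d :: r) := by
  induction l generalizing p with
  | nil =>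
    rcases p with _ | ⟨x, _ | ⟨y, p''⟩⟩
    · simp only [List.nil_append] at h
      obtain ⟨rfl, rfl⟩ := List.cons_eq_cons.1 h
      exact Or.inr (Or.inr (Or.inl ⟨rfl, rfl, rfl⟩))
    · simp only [List.cons_append, List.nil_append] at h
      obtain ⟨rfl, h2⟩ := List.cons_eq_cons.1 h
      obtain ⟨rfl, rfl⟩ := List.cons_eq_cons.1 h2
      exact Or.inr (Or.inl ⟨rfl, rfl, rfl⟩)
    · simp only [List.cons_append, List.nil_append] at h
      obtain ⟨rfl, h2⟩ := List.cons_eq_cons.1 h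
      obtain ⟨rfl, h3⟩ := List.cons_eq_cons.1 h2
      exact Or.inl ⟨p'', by simp, h3.symm⟩
  | cons z l' ih =>
    rcases p with _ | ⟨x, p'⟩
    · simp only [List.nil_append, List.cons_append] at h
      obtain ⟨rfl, rfl⟩ := List.cons_eq_cons.1 h
      exact Or.inr (Or.inr (Or.inr ⟨l', by simp, rfl⟩))
    · simp only [List.cons_append] at h
      obtain ⟨rfl, h2⟩ := List.cons_eq_cons.1 h
      rcases ih h2 with ⟨r₁, hp, hr⟩ | ⟨hp, ha, hq⟩ | ⟨hl, hc, hq⟩ | ⟨q₁, hl, hq⟩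
      · exact Or.inl ⟨r₁, by simp [hp], hr⟩
      · exact Or.inr (Or.inl ⟨by simp [hp], ha, hq⟩)
      · exact Or.inr (Or.inr (Or.inl ⟨by simp [hl], hc, hq⟩))
      · exact Or.inr (Or.inr (Or.inr ⟨q₁, by simp [hl], hq⟩))

/-- Tracking a marked first letter through a chain of swaps. -/
theorem step_extract (hsym : ∀ a b, I a b → I b a) {a : A} {w v : List A}
    (h : Steps I (a :: w) v) :
    ∃ p q, v = p ++ a :: q ∧ (∀ b ∈ p, I b a) ∧ Steps I w (p ++ q) := by
  induction h with
  | refl => exact ⟨[], w, rfl, by simp, Relation.ReflTransGen.refl⟩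
  | tail _ h2 ih =>
    obtain ⟨p, q, rfl, hp, hw⟩ := ih
    obtain ⟨l, r, c, d, hI, hv', hv⟩ := h2
    rcases split_lemma hv' with ⟨r₁, hp1, hr⟩ | ⟨hp1, ha, hq⟩ | ⟨hl, hc, hq⟩ |
        ⟨q₁, hl, hq⟩
    · -- swap inside p
      subst hp1; subst hr; subst hv
      refine ⟨l ++ d :: c :: r₁, q, by simp, ?_, ?_⟩
      · intro b hb
        apply hp
        simp only [List.mem_append, List.mem_cons] at hb ⊢
        tauto
      · refine hw.tail ⟨l, r₁ ++ q, c, d, hI, by simp, by simp⟩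
    · -- a = d : swapped pair straddles with a second
      subst hp1; subst ha; subst hq; subst hv
      refine ⟨l, c :: q, by simp, fun b hb => hp b (by simp [hb]), ?_⟩
      simpa using hw
    · -- c = a : swapped pair straddles with a first
      subst hl; subst hc; subst hq; subst hv
      refine ⟨l ++ [d], r, by simp, ?_, ?_⟩
      · intro b hb
        rcases List.mem_append.1 hb with hb | hb
        · exact hp b hb
        · simp only [List.mem_singleton] at hb
          subst hb
          exact hsym _ _ hI
      · simpa using hw
    · -- swap inside q
      subst hl; subst hq; subst hv
      refine ⟨p, q₁ ++ d :: c :: r, by simp, hp, ?_⟩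
      refine hw.tail ⟨p ++ q₁, r, c, d, hI, by simp, by simp⟩

/-- Levi's lemma for two factors, at the level of words. -/
theorem levi2_words (hsym : ∀ a b, I a b → I b a) :
    ∀ (x₁ x₂ y₁ y₂ : List A), Steps I (x₁ ++ x₂) (y₁ ++ y₂) →
    ∃ p q r s : List A,
      Steps I x₁ (p ++ q) ∧ Steps I x₂ (r ++ s) ∧ Steps I y₁ (p ++ r) ∧
      Steps I y₂ (q ++ s) ∧ ∀ a ∈ q, ∀ b ∈ r, I a b := by
  intro x₁
  induction x₁ with
  | nil =>
    intro x₂ y₁ y₂ h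
    exact ⟨[], [], y₁, y₂, Relation.ReflTransGen.refl, by simpa using h,
      Relation.ReflTransGen.refl, Relation.ReflTransGen.refl, by simp⟩
  | cons a x₁' ih =>
    intro x₂ y₁ y₂ h
    have h' : Steps I (a :: (x₁' ++ x₂)) (y₁ ++ y₂) := by simpa using h
    obtain ⟨P, Q, hv, hP, hw⟩ := step_extract hsym h'
    rcases List.append_eq_append_iff.1 hv with ⟨P₂, hP2, hy₂⟩ | ⟨c', hy₁, hc⟩
    · -- a falls inside y₂ : P = y₁ ++ P₂, y₂ = P₂ ++ a :: Q
      have hw' : Steps I (x₁' ++ x₂) (y₁ ++ (P₂ ++ Q)) := by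
        rw [hP2] at hw; simpa using hw
      obtain ⟨p', q', r', s', h1, h2, h3, h4, h5⟩ := ih x₂ y₁ (P₂ ++ Q) hw'
      have hmemy₁ : ∀ b ∈ p' ++ r', b ∈ P := by
        intro b hb
        rw [hP2]
        exact List.mem_append_left _ (h3.perm.mem_iff.2 hb)
      refine ⟨p', a :: q', r', s', ?_, h2, h3, ?_, ?_⟩
      · -- a :: x₁'  ⇝  p' ++ a :: q'
        have s1 : Steps I (a :: x₁') (a :: (p' ++ q')) := by
          simpa using h1.append_left [a]
        refine s1.trans (steps_cons_middle q' ?_)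
        intro b hb
        exact hsym _ _ (hP b (hmemy₁ b (List.mem_append_left _ hb)))
      · -- y₂ = P₂ ++ a :: Q  ⇝  (a :: q') ++ s'
        rw [hy₂]
        have hPa : ∀ b ∈ P₂, I a b := by
          intro b hb
          exact hsym _ _ (hP b (by rw [hP2]; exact List.mem_append_right _ hb))
        have s1 : Steps I (P₂ ++ a :: Q) (a :: (P₂ ++ Q)) :=
          Steps.symm hsym (steps_cons_middle Q hPa)
        have s2 : Steps I (a :: (P₂ ++ Q)) (a :: (q' ++ s')) := by
          simpa using h4.append_left [a]
        exact (s1.trans s2)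
      · -- independence of a :: q' and r'
        intro u hu b hb
        rcases List.mem_cons.1 hu with rfl | hu'
        · exact hsym _ _ (hP b (hmemy₁ b (List.mem_append_right _ hb)))
        · exact h5 u hu' b hb
    · -- a falls inside y₁ (or exactly at the boundary)
      cases c' with
      | nil =>
        -- y₁ = P, y₂ = a :: Q
        simp only [List.append_nil] at hy₁
        have hy₂ : y₂ = a :: Q := by
          simpa using hc.symm
        obtain ⟨p', q', r', s', h1, h2, h3, h4, h5⟩ := ih x₂ P Q (by simpa using hw)
        have hmemP : ∀ b ∈ p' ++ r', b ∈ P := fun b hb => h3.perm.mem_iff.2 hb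
        refine ⟨p', a :: q', r', s', ?_, h2, by rw [hy₁]; exact h3, ?_, ?_⟩
        · have s1 : Steps I (a :: x₁') (a :: (p' ++ q')) := by
            simpa using h1.append_left [a]
          refine s1.trans (steps_cons_middle q' ?_)
          intro b hb
          exact hsym _ _ (hP b (hmemP b (List.mem_append_left _ hb)))
        · rw [hy₂]
          simpa using h4.append_left [a]
        · intro u hu b hb
          rcases List.mem_cons.1 hu with rfl | hu'
          · exact hsym _ _ (hP b (hmemP b (List.mem_append_right _ hb)))
          · exact h5 u hu' b hb
      | cons a₂ Q₁ =>
        -- y₁ = P ++ a :: Q₁, Q = Q₁ ++ y₂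
        obtain ⟨ha₂, hQ⟩ := List.cons_eq_cons.1 hc
        subst ha₂
        have hw' : Steps I (x₁' ++ x₂) ((P ++ Q₁) ++ y₂) := by
          rw [hQ] at hw; simpa using hw
        obtain ⟨p', q', r', s', h1, h2, h3, h4, h5⟩ := ih x₂ (P ++ Q₁) y₂ hw'
        refine ⟨a :: p', q', r', s', ?_, h2, ?_, h4, h5⟩
        · simpa using h1.append_left [a]
        · -- y₁ = P ++ a :: Q₁ ⇝ (a :: p') ++ r'
          rw [hy₁]
          have hPa : ∀ b ∈ P, I a b := fun b hb => hsym _ _ (hP b hb)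
          have s1 : Steps I (P ++ a :: Q₁) (a :: (P ++ Q₁)) :=
            Steps.symm hsym (steps_cons_middle Q₁ hPa)
          have s2 : Steps I (a :: (P ++ Q₁)) (a :: (p' ++ r')) := by
            simpa using h3.append_left [a]
          exact s1.trans s2

/-- Levi's lemma for two factors, at the level of traces. -/
theorem levi2_trace (hsym : ∀ a b, I a b → I b a) {t₁ t₂ s₁ s₂ : Trace A I}
    (h : t₁ * t₂ = s₁ * s₂) :
    ∃ p q r s : Trace A I, t₁ = p * q ∧ t₂ = r * s ∧ s₁ = p * r ∧ s₂ = q * s ∧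
      TraceIndep A I q r := by
  obtain ⟨x₁, rfl⟩ := exists_rep t₁
  obtain ⟨x₂, rfl⟩ := exists_rep t₂
  obtain ⟨y₁, rfl⟩ := exists_rep s₁
  obtain ⟨y₂, rfl⟩ := exists_rep s₂
  rw [← trcL_append, ← trcL_append] at h
  obtain ⟨p, q, r, s, h1, h2, h3, h4, h5⟩ :=
    levi2_words hsym x₁ x₂ y₁ y₂ ((trcL_eq_iff hsym).1 h)
  exact ⟨trcL I p, trcL I q, trcL I r, trcL I s,
    by rw [← trcL_append]; exact (trcL_eq_iff hsym).2 h1,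
    by rw [← trcL_append]; exact (trcL_eq_iff hsym).2 h2,
    by rw [← trcL_append]; exact (trcL_eq_iff hsym).2 h3,
    by rw [← trcL_append]; exact (trcL_eq_iff hsym).2 h4,
    (traceIndep_trcL_iff hsym).2 h5⟩

/-- Levi's lemma for a product of two traces versus `n` traces. -/
theorem levi_2n (hsym : ∀ a b, I a b → I b a) :
    ∀ (n : ℕ) (t r : Trace A I) (v : Fin n → Trace A I),
    t * r = (List.ofFn v).prod →
    ∃ x y : Fin n → Trace A I,
      t = (List.ofFn x).prod ∧ r = (List.ofFn y).prod ∧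
      (∀ j, v j = x j * y j) ∧
      (∀ j l : Fin n, l < j → TraceIndep A I (x j) (y l)) := by
  intro n
  induction n with
  | zero =>
    intro t r v h
    simp only [List.ofFn_zero, List.prod_nil] at h
    obtain ⟨ht, hr⟩ := mul_eq_one hsym h
    exact ⟨fun i => i.elim0, fun i => i.elim0, by simp [ht], by simp [hr],
      fun j => j.elim0, fun j => j.elim0⟩
  | succ n ih =>
    intro t r v h
    rw [List.ofFn_succ, List.prod_cons] at h
    obtain ⟨p, q, rr, s, ht, hr, hv0, hV, hqr⟩ := levi2_trace hsym h
    obtain ⟨x', y', hq, hs, hvj, hind⟩ := ih q s (fun j => v j.succ) hV.symm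
    refine ⟨Fin.cons p x', Fin.cons rr y', ?_, ?_, ?_, ?_⟩
    · rw [List.ofFn_succ, List.prod_cons]
      simp only [Fin.cons_zero, Fin.cons_succ]
      rw [ht, hq]
    · rw [List.ofFn_succ, List.prod_cons]
      simp only [Fin.cons_zero, Fin.cons_succ]
      rw [hr, hs]
    · intro j
      refine Fin.cases ?_ ?_ j
      · simpa using hv0
      · intro j'
        simpa using hvj j'
    · intro j l hlj
      induction j using Fin.cases with
      | zero => exact absurd hlj (Fin.not_lt.2 (Fin.zero_le l))
      | succ j' =>
        induction l using Fin.cases with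
        | zero =>
          simp only [Fin.cons_succ, Fin.cons_zero]
          rw [hq] at hqr
          exact TraceIndep.of_mem_prod_left hqr (List.mem_ofFn.2 ⟨j', rfl⟩)
        | succ l' =>
          simp only [Fin.cons_succ]
          exact hind j' l' (Fin.succ_lt_succ_iff.1 hlj)

/-- Levi's lemma for `m` versus `n` factors, forward direction. -/
theorem levi_mn (hsym : ∀ a b, I a b → I b a) :
    ∀ (m n : ℕ) (u : Fin m → Trace A I) (v : Fin n → Trace A I),
    (List.ofFn u).prod = (List.ofFn v).prod →
    ∃ w : Fin m → Fin n → Trace A I,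
      (∀ i, u i = (List.ofFn (w i)).prod) ∧
      (∀ j, v j = (List.ofFn (fun i => w i j)).prod) ∧
      (∀ (i k : Fin m) (j l : Fin n), i < k → l < j →
        TraceIndep A I (w i j) (w k l)) := by
  intro m
  induction m with
  | zero =>
    intro n u v h
    simp only [List.ofFn_zero, List.prod_nil] at h
    have hv1 : ∀ j, v j = 1 := by
      intro j
      induction n with
      | zero => exact j.elim0
      | succ n ihn =>
        rw [List.ofFn_succ, List.prod_cons] at h
        obtain ⟨h0, hrest⟩ := mul_eq_one hsym h.symm
        refine Fin.cases h0 (fun j' => ?_) j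
        exact ihn (fun i => v i.succ) hrest.symm j'
    exact ⟨fun i => i.elim0, fun i => i.elim0, fun j => by simp [hv1 j],
      fun i => i.elim0⟩
  | succ m ih =>
    intro n u v h
    rw [List.ofFn_succ, List.prod_cons] at h
    obtain ⟨x, y, hx, hy, hvj, hxy⟩ := levi_2n hsym n (u 0)
      (List.ofFn fun i => u i.succ).prod v h
    obtain ⟨w', hrow, hcol, hind⟩ := ih n (fun i => u i.succ) y hy
    refine ⟨Fin.cons x w', ?_, ?_, ?_⟩
    · intro i
      refine Fin.cases ?_ (fun i' => ?_) i
      · simpa using hx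
      · simpa using hrow i'
    · intro j
      rw [List.ofFn_succ, List.prod_cons]
      simp only [Fin.cons_zero, Fin.cons_succ]
      rw [hvj j, hcol j]
    · intro i k j l hik hlj
      induction k using Fin.cases with
      | zero => exact absurd hik (Fin.not_lt.2 (Fin.zero_le i))
      | succ k' =>
        induction i using Fin.cases with
        | zero =>
          simp only [Fin.cons_zero, Fin.cons_succ]
          have h6 := hxy j l hlj
          rw [hcol l] at h6
          exact TraceIndep.of_mem_prod_right h6 (List.mem_ofFn.2 ⟨k', rfl⟩)
        | succ i' =>
          simp only [Fin.cons_succ]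
          exact hind i' k' j l (Fin.succ_lt_succ_iff.1 hik) hlj

/-- Merging two products indexwise, given commutation. -/
theorem prod_mul_prod {M : Type*} [Monoid M] :
    ∀ {n : ℕ} (a b : Fin n → M),
    (∀ j l : Fin n, l < j → Commute (a j) (b l)) →
    (List.ofFn a).prod * (List.ofFn b).prod = (List.ofFn fun j => a j * b j).prod := by
  intro n
  induction n with
  | zero => intro a b _; simp
  | succ n ih =>
    intro a b hc
    rw [List.ofFn_succ (f := a), List.ofFn_succ (f := b),
      List.ofFn_succ (f := fun j => a j * b j)]
    simp only [List.prod_cons]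
    have hA : Commute (b 0) (List.ofFn fun i : Fin n => a i.succ).prod := by
      apply Commute.list_prod_right
      intro x hx
      obtain ⟨i, rfl⟩ := List.mem_ofFn.1 hx
      exact (hc i.succ 0 (Fin.succ_pos i)).symm
    have key : (List.ofFn fun i : Fin n => a i.succ).prod *
        (b 0 * (List.ofFn fun i : Fin n => b i.succ).prod) =
        b 0 * ((List.ofFn fun i : Fin n => a i.succ).prod *
          (List.ofFn fun i : Fin n => b i.succ).prod) := by
      rw [← mul_assoc, ← hA.eq, mul_assoc]
    rw [mul_assoc, key, ih _ _ (fun j l hlj => hc j.succ l.succ (Fin.succ_lt_succ_iff.2 hlj)),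
      ← mul_assoc]

/-- Interchanging a double product, given commutation. -/
theorem prod_prod_comm {M : Type*} [Monoid M] :
    ∀ {m n : ℕ} (w : Fin m → Fin n → M),
    (∀ (i k : Fin m) (j l : Fin n), i < k → l < j → Commute (w i j) (w k l)) →
    (List.ofFn fun i => (List.ofFn (w i)).prod).prod
      = (List.ofFn fun j => (List.ofFn fun i => w i j).prod).prod := by
  intro m
  induction m with
  | zero =>
    intro n w _
    simp only [List.ofFn_zero, List.prod_nil]
    symm
    apply List.prod_eq_one
    intro x hx
    obtain ⟨j, rfl⟩ := List.mem_ofFn.1 hx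
    simp
  | succ m ih =>
    intro n w hc
    rw [List.ofFn_succ, List.prod_cons]
    rw [ih (fun i j => w i.succ j)
      (fun i k j l hik hlj => hc _ _ _ _ (Fin.succ_lt_succ_iff.2 hik) hlj)]
    rw [prod_mul_prod (a := w 0) (b := fun j => (List.ofFn fun i => w i.succ j).prod) ?_]
    · refine congrArg List.prod (congrArg List.ofFn (funext fun j => ?_))
      rw [List.ofFn_succ, List.prod_cons]
    · intro j l hlj
      apply Commute.list_prod_right
      intro x hx
      obtain ⟨i, rfl⟩ := List.mem_ofFn.1 hx
      exact hc 0 i.succ j l (Fin.succ_pos i) hlj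

end LeviAux

/-- Levi's lemma for trace monoids. -/
theorem levi_lemma_traces (A : Type) [Fintype A] (I : A → A → Prop)
    (hirr : ∀ a, ¬ I a a) (hsym : ∀ a b, I a b → I b a)
    (m n : ℕ) (u : Fin m → Trace A I) (v : Fin n → Trace A I) :
    (List.ofFn u).prod = (List.ofFn v).prod ↔
      ∃ w : Fin m → Fin n → Trace A I,
        (∀ i, u i = (List.ofFn (w i)).prod) ∧
        (∀ j, v j = (List.ofFn (fun i => w i j)).prod) ∧
        (∀ (i k : Fin m) (j l : Fin n), i < k → l < j →
          TraceIndep A I (w i j) (w k l)) := by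
  constructor
  · exact LeviAux.levi_mn hsym m n u v
  · rintro ⟨w, hrow, hcol, hind⟩
    have hcomm : ∀ (i k : Fin m) (j l : Fin n), i < k → l < j →
        Commute (w i j) (w k l) := fun i k j l hik hlj =>
      LeviAux.TraceIndep.commute hsym (hind i k j l hik hlj)
    calc (List.ofFn u).prod
        = (List.ofFn fun i => (List.ofFn (w i)).prod).prod :=
          congrArg List.prod (congrArg List.ofFn (funext hrow))
      _ = (List.ofFn fun j => (List.ofFn fun i => w i j).prod).prod :=
          LeviAux.prod_prod_comm w hcomm
      _ = (List.ofFn v).prod :=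
          (congrArg List.prod (congrArg List.ofFn (funext hcol))).symm
end

section
/- The trace monoid M(A,I) is cancellative: for all traces s, t, u, v ∈ M(A,I), if usv = utv then s = t. -/
section Aux

open Classical in
/-- Projection of a word onto the letters `{a, b}`. -/
noncomputable def trPr {A : Type} (a b : A) (l : List A) : List A :=
  l.filter (fun x => decide (x = a ∨ x = b))

variable {A : Type} {I : A → A → Prop}

lemma trPr_nil (a b : A) : trPr a b ([] : List A) = [] := rfl

lemma trPr_append (a b : A) (l l' : List A) :
    trPr a b (l ++ l') = trPr a b l ++ trPr a b l' := List.filter_append ..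

lemma trPr_cons_pos {a b c : A} (h : c = a ∨ c = b) (l : List A) :
    trPr a b (c :: l) = c :: trPr a b l := by
  simp [trPr, List.filter, h]

lemma trPr_cons_neg {a b c : A} (h : ¬ (c = a ∨ c = b)) (l : List A) :
    trPr a b (c :: l) = trPr a b l := by
  simp [trPr, List.filter, h]

/-- Forward direction: projections are invariant under the trace congruence. -/
lemma trPr_eq_of_rel (hirr : ∀ a, ¬ I a a) (hsym : ∀ a b, I a b → I b a)
    {w w' : FreeMonoid A} (h : ConGen.Rel (traceRel A I) w w')
    (a b : A) (hab : ¬ I a b) : trPr a b w.toList = trPr a b w'.toList := by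
  induction h with
  | of x y hxy =>
      obtain ⟨c, d, hcd, rfl, rfl⟩ := hxy
      have hne : c ≠ d := fun h => hirr c (h ▸ hcd)
      show trPr a b [c, d] = trPr a b [d, c]
      by_cases hc : c = a ∨ c = b <;> by_cases hd : d = a ∨ d = b
      · exfalso
        rcases hc with rfl | rfl <;> rcases hd with rfl | rfl
        · exact hne rfl
        · exact hab hcd
        · exact hab (hsym _ _ hcd)
        · exact hne rfl
      · rw [show ([c, d] : List A) = [c] ++ [d] from rfl,
          show ([d, c] : List A) = [d] ++ [c] from rfl, trPr_append, trPr_append,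
          trPr_cons_neg hd]
        simp [trPr_nil]
      · rw [show ([c, d] : List A) = [c] ++ [d] from rfl,
          show ([d, c] : List A) = [d] ++ [c] from rfl, trPr_append, trPr_append,
          trPr_cons_neg hc]
        simp [trPr_nil]
      · rw [trPr_cons_neg hc, trPr_cons_neg hd, trPr_cons_neg hd, trPr_cons_neg hc]
  | refl => rfl
  | symm _ ih => exact ih.symm
  | trans _ _ ih1 ih2 => exact ih1.trans ih2
  | mul _ _ ih1 ih2 =>
      show trPr a b (_ ++ _) = trPr a b (_ ++ _)
      rw [trPr_append, trPr_append, ih1, ih2]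

/-- Split a list at the first occurrence of an element. -/
lemma exists_split_first {c : A} : ∀ {l : List A}, c ∈ l →
    ∃ p q, l = p ++ c :: q ∧ c ∉ p := by
  intro l hl
  induction l with
  | nil => simp at hl
  | cons d l ih =>
      by_cases hdc : d = c
      · exact ⟨[], l, by rw [hdc]; rfl, by simp⟩
      · have hcl : c ∈ l := by
          rcases List.mem_cons.mp hl with h | h
          · exact absurd h.symm hdc
          · exact h
        obtain ⟨p, q, rfl, hcp⟩ := ih hcl
        refine ⟨d :: p, q, rfl, ?_⟩
        simp only [List.mem_cons, not_or]
        exact ⟨fun h => hdc h.symm, hcp⟩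

/-- Commuting a letter independent of all of `p` to the front. -/
lemma rel_commute_head (hsym : ∀ a b, I a b → I b a) (c : A) (q : List A) :
    ∀ p : List A, (∀ d ∈ p, I c d) →
    ConGen.Rel (traceRel A I) (FreeMonoid.ofList (p ++ c :: q))
      (FreeMonoid.ofList (c :: (p ++ q))) := by
  intro p
  induction p with
  | nil => intro _; exact ConGen.Rel.refl _
  | cons d p ih =>
      intro hp
      have h1 : ConGen.Rel (traceRel A I)
          (FreeMonoid.ofList (d :: (p ++ c :: q)))
          (FreeMonoid.ofList (d :: c :: (p ++ q))) :=
        ConGen.Rel.mul (ConGen.Rel.refl (FreeMonoid.of d))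
          (ih fun e he => hp e (List.mem_cons_of_mem _ he))
      have h2 : ConGen.Rel (traceRel A I)
          (FreeMonoid.ofList (d :: c :: (p ++ q)))
          (FreeMonoid.ofList (c :: d :: (p ++ q))) :=
        ConGen.Rel.mul
          (ConGen.Rel.of _ _ (show traceRel A I (FreeMonoid.of d * FreeMonoid.of c)
            (FreeMonoid.of c * FreeMonoid.of d) from
            ⟨d, c, hsym c d (hp d (List.mem_cons_self (a := d) (l := p))), rfl, rfl⟩))
          (ConGen.Rel.refl (FreeMonoid.ofList (p ++ q)))
      exact h1.trans h2

/-- Projection lemma: words with equal projections on all dependent pairs are equivalent. -/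
lemma rel_of_trPr (hirr : ∀ a, ¬ I a a) (hsym : ∀ a b, I a b → I b a) :
    ∀ w w' : List A, (∀ a b, ¬ I a b → trPr a b w = trPr a b w') →
    ConGen.Rel (traceRel A I) (FreeMonoid.ofList w) (FreeMonoid.ofList w') := by
  intro w
  induction w with
  | nil =>
      intro w' hp
      cases w' with
      | nil => exact ConGen.Rel.refl _
      | cons e rest =>
          exfalso
          have h := hp e e (hirr e)
          rw [trPr_cons_pos (Or.inl rfl)] at h
          have : trPr e e ([] : List A) = [] := rfl
          rw [this] at h
          exact List.cons_ne_nil _ _ h.symm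
  | cons c w₁ ih =>
      intro w' hp
      -- c occurs in w'
      have hcw' : c ∈ w' := by
        by_contra hc
        have h := hp c c (hirr c)
        rw [trPr_cons_pos (Or.inl rfl)] at h
        have h2 : trPr c c w' = [] := by
          simp only [trPr, List.filter_eq_nil_iff, decide_eq_true_eq]
          rintro x hx (rfl | rfl) <;> exact hc hx
        rw [h2] at h
        exact List.cons_ne_nil _ _ h
      obtain ⟨p, q, rfl, hcp⟩ := exists_split_first hcw'
      -- every letter of p is independent of c
      have hpI : ∀ d ∈ p, I c d := by
        intro d hd
        by_contra hIcd
        have h := hp c d hIcd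
        rw [trPr_cons_pos (Or.inl rfl), trPr_append, trPr_cons_pos (Or.inl rfl)] at h
        cases hL : trPr c d p with
        | nil =>
            have : d ∈ trPr c d p := List.mem_filter.mpr ⟨hd, by simp⟩
            rw [hL] at this; simp at this
        | cons e L =>
            rw [hL] at h
            have he : e ∈ p := List.mem_of_mem_filter (hL ▸ List.mem_cons_self (a := e) (l := L))
            have : c = e := by
              have := congrArg (·.head?) h
              simpa using this
            exact hcp (this ▸ he)
      -- w' is equivalent to c :: (p ++ q)
      have hw' : ConGen.Rel (traceRel A I) (FreeMonoid.ofList (p ++ c :: q))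
          (FreeMonoid.ofList (c :: (p ++ q))) := rel_commute_head hsym c q p hpI
      -- projections of w₁ and p ++ q agree
      have hp₁ : ∀ a b, ¬ I a b → trPr a b w₁ = trPr a b (p ++ q) := by
        intro a b hab
        have h1 := hp a b hab
        have h2 : trPr a b (p ++ c :: q) = trPr a b (c :: (p ++ q)) :=
          trPr_eq_of_rel hirr hsym hw' a b hab
        rw [h2] at h1
        by_cases hc : c = a ∨ c = b
        · rw [trPr_cons_pos hc, trPr_cons_pos hc] at h1
          exact List.tail_eq_of_cons_eq h1
        · rw [trPr_cons_neg hc, trPr_cons_neg hc] at h1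
          exact h1
      have hrec := ih (p ++ q) hp₁
      have : ConGen.Rel (traceRel A I) (FreeMonoid.ofList (c :: w₁))
          (FreeMonoid.ofList (c :: (p ++ q))) :=
        ConGen.Rel.mul (ConGen.Rel.refl (FreeMonoid.of c)) hrec
      exact this.trans hw'.symm

end Aux

/-- The trace monoid M(A,I) is cancellative. -/
theorem trace_monoid_cancellative (A : Type) [Fintype A] (I : A → A → Prop)
    (hirr : ∀ a, ¬ I a a) (hsym : ∀ a b, I a b → I b a)
    (s t u v : Trace A I) (h : u * s * v = u * t * v) : s = t := by
  obtain ⟨ws, rfl⟩ := Con.mk'_surjective s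
  obtain ⟨wt, rfl⟩ := Con.mk'_surjective t
  obtain ⟨wu, rfl⟩ := Con.mk'_surjective u
  obtain ⟨wv, rfl⟩ := Con.mk'_surjective v
  rw [← map_mul, ← map_mul, ← map_mul, ← map_mul] at h
  have hrel : ConGen.Rel (traceRel A I) (wu * ws * wv) (wu * wt * wv) := (Con.eq (traceCon A I)).mp h
  have hpr : ∀ a b, ¬ I a b → trPr a b ws.toList = trPr a b wt.toList := by
    intro a b hab
    have := trPr_eq_of_rel hirr hsym hrel a b hab
    have h2 : (trPr a b wu.toList ++ trPr a b ws.toList) ++ trPr a b wv.toList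
        = (trPr a b wu.toList ++ trPr a b wt.toList) ++ trPr a b wv.toList := by
      rw [← trPr_append, ← trPr_append, ← trPr_append, ← trPr_append]
      exact this
    exact List.append_cancel_left (List.append_cancel_right h2)
  have := rel_of_trPr hirr hsym ws.toList wt.toList hpr
  exact (Con.eq (traceCon A I)).mpr this
end

section
/- Let u ∈ M(A,I) be a nonempty connected trace. For all x ∈ ℕ and traces y₁, y₂: u^x = y₁y₂ if and only if there exist l, k, c ∈ ℕ and traces s, p such that y₁ = u^l s, y₂ = p u^k, s p = u^c, l + k + c = x, and c ≤ |A|. -/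
namespace TraceAux

variable {A : Type} {I : A → A → Prop}

/-- One elementary commutation step on words (lists). -/
def Step (I : A → A → Prop) : List A → List A → Prop :=
  fun x y => ∃ (w₁ w₂ : List A) (a b : A), I a b ∧ x = w₁ ++ a :: b :: w₂ ∧ y = w₁ ++ b :: a :: w₂

/-- The commutation congruence on words, as chains of elementary steps. -/
def Cong (I : A → A → Prop) : List A → List A → Prop := Relation.ReflTransGen (Step I)

theorem Cong.refl (w : List A) : Cong I w w := Relation.ReflTransGen.refl

theorem Cong.trans {w v z : List A} (h : Cong I w v) (h' : Cong I v z) : Cong I w z :=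
  Relation.ReflTransGen.trans h h'

theorem Step.symm (hsym : ∀ a b, I a b → I b a) {w v : List A} (h : Step I w v) : Step I v w := by
  obtain ⟨w₁, w₂, a, b, hab, rfl, rfl⟩ := h
  exact ⟨w₁, w₂, b, a, hsym _ _ hab, rfl, rfl⟩

theorem Cong.symm (hsym : ∀ a b, I a b → I b a) {w v : List A} (h : Cong I w v) : Cong I v w := by
  induction h with
  | refl => exact Cong.refl _
  | tail _ h ih => exact Relation.ReflTransGen.trans (Relation.ReflTransGen.single (h.symm hsym)) ih

theorem Step.perm {w v : List A} (h : Step I w v) : w.Perm v := by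
  obtain ⟨w₁, w₂, a, b, hab, rfl, rfl⟩ := h
  exact List.Perm.append_left w₁ (List.Perm.swap b a w₂)

theorem Cong.perm {w v : List A} (h : Cong I w v) : w.Perm v := by
  induction h with
  | refl => exact List.Perm.refl _
  | tail _ h ih => exact ih.trans h.perm

theorem Step.append_left {w v : List A} (z : List A) (h : Step I w v) :
    Step I (z ++ w) (z ++ v) := by
  obtain ⟨w₁, w₂, a, b, hab, rfl, rfl⟩ := h
  exact ⟨z ++ w₁, w₂, a, b, hab, by simp, by simp⟩

theorem Step.append_right {w v : List A} (z : List A) (h : Step I w v) :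
    Step I (w ++ z) (v ++ z) := by
  obtain ⟨w₁, w₂, a, b, hab, rfl, rfl⟩ := h
  exact ⟨w₁, w₂ ++ z, a, b, hab, by simp, by simp⟩

theorem Cong.append_left {w v : List A} (z : List A) (h : Cong I w v) :
    Cong I (z ++ w) (z ++ v) :=
  Relation.ReflTransGen.lift (z ++ ·) (fun _ _ h => h.append_left z) _ _ h

theorem Cong.append_right {w v : List A} (z : List A) (h : Cong I w v) :
    Cong I (w ++ z) (v ++ z) :=
  Relation.ReflTransGen.lift (· ++ z) (fun _ _ h => h.append_right z) _ _ h

theorem Cong.append {w w' v v' : List A} (h : Cong I w w') (h' : Cong I v v') :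
    Cong I (w ++ v) (w' ++ v') :=
  (h.append_right v).trans (h'.append_left w')

/-- Moving a letter independent from everything before it to the front. -/
theorem cong_cons_of_indep {x : A} (v₁ v₂ : List A) (h : ∀ a ∈ v₁, I a x) :
    Cong I (v₁ ++ x :: v₂) (x :: (v₁ ++ v₂)) := by
  induction v₁ with
  | nil => exact Cong.refl _
  | cons c v₁ ih =>
    have h1 : Cong I (c :: (v₁ ++ x :: v₂)) (c :: (x :: (v₁ ++ v₂))) :=
      Cong.append_left [c] (ih (fun a ha => h a (List.mem_cons_of_mem _ ha)))
    refine h1.trans (Relation.ReflTransGen.single ?_)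
    exact ⟨[], v₁ ++ v₂, c, x, h c List.mem_cons_self, rfl, rfl⟩

theorem extract {x : A} {w v : List A} (h : Cong I (x :: w) v) :
    ∃ v₁ v₂, v = v₁ ++ x :: v₂ ∧ (∀ a ∈ v₁, I x a) ∧ Cong I w (v₁ ++ v₂) := by
  induction h with
  | refl => exact ⟨[], w, rfl, by simp, Relation.ReflTransGen.refl⟩
  | tail _ hstep ih =>
    obtain ⟨v₁, v₂, rfl, hind, hcong⟩ := ih
    obtain ⟨u₁, u₂, a, b, hab, he, rfl⟩ := hstep
    rcases List.append_eq_append_iff.mp he.symm with ⟨m, hm1, hm2⟩ | ⟨m, hm1, hm2⟩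
    · -- v₁ = u₁ ++ m,  a :: b :: u₂ = m ++ x :: v₂
      rcases m with _ | ⟨c, _ | ⟨d, m'⟩⟩
      · simp only [List.nil_append, List.cons.injEq] at hm2
        obtain ⟨rfl, rfl⟩ := hm2
        simp only [List.append_nil] at hm1; subst hm1
        refine ⟨v₁ ++ [b], u₂, by simp, ?_, ?_⟩
        · intro z hz
          rcases List.mem_append.mp hz with h1 | h1
          · exact hind z h1
          · simp only [List.mem_singleton] at h1; subst h1; exact hab
        · simpa using hcong
      · simp only [List.cons_append, List.nil_append, List.cons.injEq] at hm2
        obtain ⟨rfl, rfl, rfl⟩ := hm2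
        subst hm1
        refine ⟨u₁, a :: u₂, by simp, ?_, ?_⟩
        · intro z hz; exact hind z (by simp [hz])
        · simpa using hcong
      · simp only [List.cons_append, List.cons.injEq] at hm2
        obtain ⟨rfl, rfl, hu₂⟩ := hm2
        subst hu₂ hm1
        refine ⟨u₁ ++ b :: a :: m', v₂, by simp, ?_, ?_⟩
        · intro z hz
          refine hind z ?_
          have hz' : z ∈ u₁ ++ a :: b :: m' := by
            have hp : (u₁ ++ b :: a :: m').Perm (u₁ ++ a :: b :: m') :=
              List.Perm.append_left u₁ (List.Perm.swap a b m')
            exact hp.mem_iff.mp hz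
          simpa using hz'
        · refine Relation.ReflTransGen.tail hcong ?_
          exact ⟨u₁, m' ++ v₂, a, b, hab, by simp, by simp⟩
    · -- u₁ = v₁ ++ m,  x :: v₂ = m ++ a :: b :: u₂
      rcases m with _ | ⟨c, m'⟩
      · simp only [List.nil_append, List.cons.injEq] at hm2
        obtain ⟨rfl, rfl⟩ := hm2
        simp only [List.append_nil] at hm1; subst hm1
        refine ⟨u₁ ++ [b], u₂, by simp, ?_, ?_⟩
        · intro z hz
          rcases List.mem_append.mp hz with h1 | h1
          · exact hind z h1
          · simp only [List.mem_singleton] at h1; subst h1; exact hab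
        · simpa using hcong
      · simp only [List.cons_append, List.cons.injEq] at hm2
        obtain ⟨rfl, hv₂⟩ := hm2
        subst hv₂ hm1
        refine ⟨v₁, m' ++ b :: a :: u₂, by simp, hind, ?_⟩
        refine Relation.ReflTransGen.tail hcong ?_
        exact ⟨v₁ ++ m', u₂, a, b, hab, by simp, by simp⟩

theorem cons_cancel (hirr : ∀ a, ¬ I a a) {x : A} {w v : List A}
    (h : Cong I (x :: w) (x :: v)) : Cong I w v := by
  obtain ⟨v₁, v₂, he, hind, hcong⟩ := extract h
  rcases v₁ with _ | ⟨c, v₁'⟩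
  · simp only [List.nil_append, List.cons.injEq] at he
    obtain ⟨-, rfl⟩ := he
    simpa using hcong
  · simp only [List.cons_append, List.cons.injEq] at he
    obtain ⟨rfl, -⟩ := he
    exact absurd (hind x (by simp)) (hirr x)

theorem Step.rev (hsym : ∀ a b, I a b → I b a) {w v : List A} (h : Step I w v) :
    Step I w.reverse v.reverse := by
  obtain ⟨w₁, w₂, a, b, hab, rfl, rfl⟩ := h
  exact ⟨w₂.reverse, w₁.reverse, b, a, hsym _ _ hab, by simp, by simp⟩

theorem Cong.rev (hsym : ∀ a b, I a b → I b a) {w v : List A} (h : Cong I w v) :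
    Cong I w.reverse v.reverse :=
  Relation.ReflTransGen.lift List.reverse (fun _ _ h => h.rev hsym) _ _ h

theorem snoc_cancel (hirr : ∀ a, ¬ I a a) (hsym : ∀ a b, I a b → I b a) {x : A} {w v : List A}
    (h : Cong I (w ++ [x]) (v ++ [x])) : Cong I w v := by
  have h1 : Cong I (x :: w.reverse) (x :: v.reverse) := by
    have := h.rev hsym
    simpa using this
  have h2 := (cons_cancel hirr h1).rev hsym
  simpa using h2

theorem mem_of_cong {w v : List A} (h : Cong I w v) {z : A} (hz : z ∈ w) : z ∈ v :=
  h.perm.mem_iff.mp hz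

theorem levi (hsym : ∀ a b, I a b → I b a) :
    ∀ (a₁ a₂ b₁ b₂ : List A), Cong I (a₁ ++ a₂) (b₁ ++ b₂) →
    ∃ r₁ r₂ r₃ r₄ : List A, Cong I a₁ (r₁ ++ r₂) ∧ Cong I a₂ (r₃ ++ r₄) ∧
      Cong I b₁ (r₁ ++ r₃) ∧ Cong I b₂ (r₂ ++ r₄) ∧ ∀ a ∈ r₂, ∀ b ∈ r₃, I a b := by
  intro a₁
  induction a₁ with
  | nil =>
    intro a₂ b₁ b₂ h
    exact ⟨[], [], b₁, b₂, Cong.refl _, by simpa using h, by simpa using Cong.refl b₁,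
      Cong.refl _, by simp⟩
  | cons x a₁' ih =>
    intro a₂ b₁ b₂ h
    obtain ⟨v₁, v₂, he, hxv, hc⟩ := extract (by simpa using h)
    rcases List.append_eq_append_iff.mp he with ⟨m, hm1, hm2⟩ | ⟨m, hm1, hm2⟩
    · -- v₁ = b₁ ++ m, b₂ = m ++ x :: v₂  (x inside b₂)
      subst hm1 hm2
      have hc' : Cong I (a₁' ++ a₂) (b₁ ++ (m ++ v₂)) := by
        simpa [List.append_assoc] using hc
      obtain ⟨r₁, r₂, r₃, r₄, h1, h2, h3, h4, h5⟩ := ih a₂ b₁ (m ++ v₂) hc'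
      have hmemb₁ : ∀ a ∈ r₁ ++ r₃, a ∈ b₁ := fun a ha => (Cong.perm h3).mem_iff.mpr ha
      refine ⟨r₁, x :: r₂, r₃, r₄, ?_, h2, h3, ?_, ?_⟩
      · -- Cong (x :: a₁') (r₁ ++ x :: r₂)
        have s1 : Cong I (x :: a₁') (x :: (r₁ ++ r₂)) := Cong.append_left [x] h1
        refine s1.trans (Cong.symm hsym (cong_cons_of_indep r₁ r₂ ?_))
        intro a ha
        exact hsym _ _ (hxv a (List.mem_append.mpr (Or.inl (hmemb₁ a (by simp [ha])))))
      · -- Cong (m ++ x :: v₂) ((x :: r₂) ++ r₄)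
        have s1 : Cong I (m ++ x :: v₂) (x :: (m ++ v₂)) :=
          cong_cons_of_indep m v₂ (fun a ha =>
            hsym _ _ (hxv a (List.mem_append.mpr (Or.inr ha))))
        exact s1.trans (by simpa using Cong.append_left [x] h4)
      · intro a ha b hb
        rcases List.mem_cons.mp ha with rfl | ha'
        · exact hxv b (List.mem_append.mpr (Or.inl (hmemb₁ b (by simp [hb]))))
        · exact h5 a ha' b hb
    · -- b₁ = v₁ ++ m, x :: v₂ = m ++ b₂
      rcases m with _ | ⟨c, m'⟩
      · -- b₂ = x :: v₂, b₁ = v₁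
        simp only [List.append_nil] at hm1
        subst hm1 hm2
        obtain ⟨r₁, r₂, r₃, r₄, h1, h2, h3, h4, h5⟩ := ih a₂ b₁ v₂ hc
        have hmemb₁ : ∀ a ∈ r₁ ++ r₃, a ∈ b₁ := fun a ha => (Cong.perm h3).mem_iff.mpr ha
        refine ⟨r₁, x :: r₂, r₃, r₄, ?_, h2, h3, ?_, ?_⟩
        · have s1 : Cong I (x :: a₁') (x :: (r₁ ++ r₂)) := Cong.append_left [x] h1
          refine s1.trans (Cong.symm hsym (cong_cons_of_indep r₁ r₂ ?_))
          intro a ha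
          exact hsym _ _ (hxv a (hmemb₁ a (by simp [ha])))
        · exact Cong.append_left [x] h4
        · intro a ha b hb
          rcases List.mem_cons.mp ha with rfl | ha'
          · exact hxv b (hmemb₁ b (by simp [hb]))
          · exact h5 a ha' b hb
      · -- b₁ = v₁ ++ x :: m', v₂ = m' ++ b₂
        simp only [List.cons_append, List.cons.injEq] at hm2
        obtain ⟨rfl, rfl⟩ := hm2
        subst hm1
        have hc' : Cong I (a₁' ++ a₂) ((v₁ ++ m') ++ b₂) := by
          simpa [List.append_assoc] using hc
        obtain ⟨r₁, r₂, r₃, r₄, h1, h2, h3, h4, h5⟩ := ih a₂ (v₁ ++ m') b₂ hc'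
        refine ⟨x :: r₁, r₂, r₃, r₄, ?_, h2, ?_, h4, h5⟩
        · exact by simpa using Cong.append_left [x] h1
        · have s1 : Cong I (v₁ ++ x :: m') (x :: (v₁ ++ m')) :=
            cong_cons_of_indep v₁ m' (fun a ha => hsym _ _ (hxv a ha))
          exact s1.trans (by simpa using Cong.append_left [x] h3)

/-- traceCon implies Cong (needs symmetry). -/
theorem cong_of_traceCon (hsym : ∀ a b, I a b → I b a) {w v : FreeMonoid A}
    (h : traceCon A I w v) : Cong I w.toList v.toList := by
  induction h with
  | of x y hxy =>
    obtain ⟨a, b, hab, rfl, rfl⟩ := hxy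
    exact Relation.ReflTransGen.single ⟨[], [], a, b, hab, rfl, rfl⟩
  | refl => exact Relation.ReflTransGen.refl
  | symm _ ih => exact ih.symm hsym
  | trans _ _ ih1 ih2 => exact Relation.ReflTransGen.trans ih1 ih2
  | mul _ _ ih1 ih2 => exact ih1.append ih2

theorem traceCon_of_step {l l' : List A} (h : Step I l l') :
    traceCon A I (FreeMonoid.ofList l) (FreeMonoid.ofList l') := by
  obtain ⟨w₁, w₂, a, b, hab, rfl, rfl⟩ := h
  have h1 : traceCon A I (FreeMonoid.of a * FreeMonoid.of b) (FreeMonoid.of b * FreeMonoid.of a) :=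
    ConGen.Rel.of _ _ ⟨a, b, hab, rfl, rfl⟩
  have h2 := ConGen.Rel.mul (ConGen.Rel.refl (FreeMonoid.ofList w₁))
    (ConGen.Rel.mul h1 (ConGen.Rel.refl (FreeMonoid.ofList w₂)))
  have e1 : FreeMonoid.ofList (w₁ ++ a :: b :: w₂) =
      FreeMonoid.ofList w₁ * (FreeMonoid.of a * FreeMonoid.of b * FreeMonoid.ofList w₂) := by
    simp [FreeMonoid.ofList_append, FreeMonoid.ofList_cons, mul_assoc]
  have e2 : FreeMonoid.ofList (w₁ ++ b :: a :: w₂) =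
      FreeMonoid.ofList w₁ * (FreeMonoid.of b * FreeMonoid.of a * FreeMonoid.ofList w₂) := by
    simp [FreeMonoid.ofList_append, FreeMonoid.ofList_cons, mul_assoc]
  rw [e1, e2]
  exact h2

theorem traceCon_of_cong {w v : FreeMonoid A} (h : Cong I w.toList v.toList) :
    traceCon A I w v := by
  have : ∀ l l' : List A, Cong I l l' → traceCon A I (FreeMonoid.ofList l) (FreeMonoid.ofList l') := by
    intro l l' h
    induction h with
    | refl => exact (traceCon A I).refl _
    | tail _ hstep ih => exact (traceCon A I).trans ih (traceCon_of_step hstep)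
  simpa [FreeMonoid.ofList_toList] using this w.toList v.toList h

theorem trc_eq_iff (hsym : ∀ a b, I a b → I b a) {w v : FreeMonoid A} :
    trc A I w = trc A I v ↔ Cong I w.toList v.toList := by
  have h1 : trc A I w = trc A I v ↔ (traceCon A I) w v := by
    rw [trc, trc, show (traceCon A I).mk' w = (w : Trace A I) from rfl,
      show (traceCon A I).mk' v = (v : Trace A I) from rfl]
    exact Con.eq _
  rw [h1]
  exact ⟨cong_of_traceCon hsym, traceCon_of_cong⟩

theorem traceCon_perm {w v : FreeMonoid A} (h : traceCon A I w v) : w.toList.Perm v.toList := by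
  induction h with
  | of x y hxy =>
    obtain ⟨a, b, hab, rfl, rfl⟩ := hxy
    exact List.Perm.swap b a []
  | refl => exact List.Perm.refl _
  | symm _ ih => exact ih.symm
  | trans _ _ ih1 ih2 => exact ih1.trans ih2
  | mul _ _ ih1 ih2 => exact ih1.append ih2

theorem trc_surj (t : Trace A I) : ∃ w, t = trc A I w := by
  obtain ⟨w, hw⟩ := Con.mk'_surjective (c := traceCon A I) t
  exact ⟨w, hw.symm⟩

theorem trc_mul (w v : FreeMonoid A) : trc A I (w * v) = trc A I w * trc A I v := map_mul _ _ _
theorem trc_one : trc A I (1 : FreeMonoid A) = 1 := map_one _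

def msT : Trace A I → Multiset A :=
  fun t => Con.liftOn t (fun w => (w.toList : Multiset A))
    (fun _ _ h => Multiset.coe_eq_coe.mpr (traceCon_perm h))

theorem msT_trc (w : FreeMonoid A) : msT (trc A I w) = (w.toList : Multiset A) := rfl

theorem msT_mul (s t : Trace A I) : msT (s * t) = msT s + msT t := by
  obtain ⟨ws, rfl⟩ := trc_surj s
  obtain ⟨wt, rfl⟩ := trc_surj t
  rw [← trc_mul, msT_trc, msT_trc, msT_trc]
  simp [FreeMonoid.toList_mul]

theorem msT_one : msT (1 : Trace A I) = 0 := rfl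

theorem eq_one_iff_msT {t : Trace A I} : t = 1 ↔ msT t = 0 := by
  constructor
  · rintro rfl; rfl
  · intro h
    obtain ⟨w, rfl⟩ := trc_surj t
    rw [msT_trc] at h
    have : w.toList = [] := by simpa using h
    have hw : w = 1 := by
      have := congrArg FreeMonoid.ofList this
      simpa [FreeMonoid.ofList_toList] using this
    rw [hw, trc_one]

theorem of_left_cancel (hirr : ∀ a, ¬ I a a) (hsym : ∀ a b, I a b → I b a) (x : A)
    {s₁ s₂ : Trace A I} (h : trc A I (.of x) * s₁ = trc A I (.of x) * s₂) : s₁ = s₂ := by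
  obtain ⟨w₁, rfl⟩ := trc_surj s₁
  obtain ⟨w₂, rfl⟩ := trc_surj s₂
  rw [← trc_mul, ← trc_mul, trc_eq_iff hsym] at h
  rw [trc_eq_iff hsym]
  refine cons_cancel hirr (x := x) ?_
  simpa [FreeMonoid.toList_mul, FreeMonoid.toList_of] using h

theorem of_right_cancel (hirr : ∀ a, ¬ I a a) (hsym : ∀ a b, I a b → I b a) (x : A)
    {s₁ s₂ : Trace A I} (h : s₁ * trc A I (.of x) = s₂ * trc A I (.of x)) : s₁ = s₂ := by
  obtain ⟨w₁, rfl⟩ := trc_surj s₁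
  obtain ⟨w₂, rfl⟩ := trc_surj s₂
  rw [← trc_mul, ← trc_mul, trc_eq_iff hsym] at h
  rw [trc_eq_iff hsym]
  refine snoc_cancel hirr hsym (x := x) ?_
  simpa [FreeMonoid.toList_mul, FreeMonoid.toList_of] using h

theorem mul_left_cancelT_aux (hirr : ∀ a, ¬ I a a) (hsym : ∀ a b, I a b → I b a) :
    ∀ (l : List A) {s₁ s₂ : Trace A I},
      trc A I (.ofList l) * s₁ = trc A I (.ofList l) * s₂ → s₁ = s₂ := by
  intro l
  induction l with
  | nil =>
    intro s₁ s₂ h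
    simpa [show FreeMonoid.ofList ([] : List A) = 1 from rfl, trc_one] using h
  | cons x l ih =>
    intro s₁ s₂ h
    rw [FreeMonoid.ofList_cons, trc_mul, mul_assoc, mul_assoc] at h
    exact ih (of_left_cancel hirr hsym x h)

theorem mul_left_cancelT (hirr : ∀ a, ¬ I a a) (hsym : ∀ a b, I a b → I b a)
    {t s₁ s₂ : Trace A I} (h : t * s₁ = t * s₂) : s₁ = s₂ := by
  obtain ⟨w, rfl⟩ := trc_surj t
  exact mul_left_cancelT_aux hirr hsym w.toList h

theorem mul_right_cancelT_aux (hirr : ∀ a, ¬ I a a) (hsym : ∀ a b, I a b → I b a) :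
    ∀ (l : List A) {s₁ s₂ : Trace A I},
      s₁ * trc A I (.ofList l) = s₂ * trc A I (.ofList l) → s₁ = s₂ := by
  intro l
  induction l using List.reverseRecOn with
  | nil =>
    intro s₁ s₂ h
    simpa [show FreeMonoid.ofList ([] : List A) = 1 from rfl, trc_one] using h
  | append_singleton l x ih =>
    intro s₁ s₂ h
    rw [FreeMonoid.ofList_append, trc_mul, ← mul_assoc, ← mul_assoc] at h
    exact ih (of_right_cancel hirr hsym x h)

theorem mul_right_cancelT (hirr : ∀ a, ¬ I a a) (hsym : ∀ a b, I a b → I b a)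
    {t s₁ s₂ : Trace A I} (h : s₁ * t = s₂ * t) : s₁ = s₂ := by
  obtain ⟨w, rfl⟩ := trc_surj t
  exact mul_right_cancelT_aux hirr hsym w.toList h

theorem leviT (hsym : ∀ a b, I a b → I b a) {t₁ t₂ w₁ w₂ : Trace A I} (h : t₁ * t₂ = w₁ * w₂) :
    ∃ r₁ r₂ r₃ r₄ : Trace A I, t₁ = r₁ * r₂ ∧ t₂ = r₃ * r₄ ∧ w₁ = r₁ * r₃ ∧ w₂ = r₂ * r₄ ∧
      ∀ a ∈ msT r₂, ∀ b ∈ msT r₃, I a b := by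
  obtain ⟨x₁, rfl⟩ := trc_surj t₁
  obtain ⟨x₂, rfl⟩ := trc_surj t₂
  obtain ⟨z₁, rfl⟩ := trc_surj w₁
  obtain ⟨z₂, rfl⟩ := trc_surj w₂
  rw [← trc_mul, ← trc_mul, trc_eq_iff hsym] at h
  obtain ⟨r₁, r₂, r₃, r₄, h1, h2, h3, h4, h5⟩ :=
    levi hsym x₁.toList x₂.toList z₁.toList z₂.toList (by simpa [FreeMonoid.toList_mul] using h)
  refine ⟨trc A I (.ofList r₁), trc A I (.ofList r₂), trc A I (.ofList r₃), trc A I (.ofList r₄),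
    ?_, ?_, ?_, ?_, ?_⟩
  · rw [← trc_mul, trc_eq_iff hsym]; simpa [FreeMonoid.toList_mul] using h1
  · rw [← trc_mul, trc_eq_iff hsym]; simpa [FreeMonoid.toList_mul] using h2
  · rw [← trc_mul, trc_eq_iff hsym]; simpa [FreeMonoid.toList_mul] using h3
  · rw [← trc_mul, trc_eq_iff hsym]; simpa [FreeMonoid.toList_mul] using h4
  · intro a ha b hb
    rw [msT_trc] at ha hb
    exact h5 a (by simpa using ha) b (by simpa using hb)

/-- Ordered product of the first `c` values of `f`. -/
def prodL (c : ℕ) (f : ℕ → Trace A I) : Trace A I := ((List.range c).map f).prod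

theorem prodL_zero (f : ℕ → Trace A I) : prodL 0 f = 1 := rfl

theorem prodL_succ_left (c : ℕ) (f : ℕ → Trace A I) :
    prodL (c + 1) f = f 0 * prodL c (fun i => f (i + 1)) := by
  rw [prodL, List.range_succ_eq_map]
  simp [prodL, List.map_map, Function.comp_def]

theorem prodL_succ_right (c : ℕ) (f : ℕ → Trace A I) :
    prodL (c + 1) f = prodL c f * f c := by
  rw [prodL, List.range_succ]
  simp [prodL]

theorem prodL_congr (c : ℕ) (f g : ℕ → Trace A I) (h : ∀ i < c, f i = g i) :
    prodL c f = prodL c g := by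
  unfold prodL
  congr 1
  apply List.map_congr_left
  intro i hi
  exact h i (List.mem_range.mp hi)

theorem mem_msT_prodL {c : ℕ} {f : ℕ → Trace A I} {i : ℕ} (hi : i < c) {a : A}
    (ha : a ∈ msT (f i)) : a ∈ msT (prodL c f) := by
  induction c with
  | zero => omega
  | succ c ih =>
    rw [prodL_succ_right, msT_mul, Multiset.mem_add]
    rcases Nat.lt_or_ge i c with h | h
    · exact Or.inl (ih h)
    · have : i = c := by omega
      subst this
      exact Or.inr ha

theorem decomp (hsym : ∀ a b, I a b → I b a) (u : Trace A I) :
    ∀ (c : ℕ) (s p : Trace A I), s * p = u ^ c →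
    ∃ f g : ℕ → Trace A I, s = prodL c f ∧ p = prodL c g ∧
      (∀ i, i < c → f i * g i = u) ∧
      (∀ i j, i < j → j < c → ∀ a ∈ msT (g i), ∀ b ∈ msT (f j), I a b) := by
  intro c
  induction c with
  | zero =>
    intro s p h
    rw [pow_zero] at h
    have hms : msT s + msT p = 0 := by rw [← msT_mul, h, msT_one]
    rw [add_eq_zero] at hms
    refine ⟨fun _ => 1, fun _ => 1, ?_, ?_, ?_, ?_⟩
    · rw [prodL_zero]; exact eq_one_iff_msT.mpr hms.1
    · rw [prodL_zero]; exact eq_one_iff_msT.mpr hms.2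
    · intro i hi; exact absurd hi (Nat.not_lt_zero i)
    · intro i j _ hj; exact absurd hj (Nat.not_lt_zero j)
  | succ c ih =>
    intro s p h
    rw [pow_succ'] at h
    obtain ⟨r₁, r₂, r₃, r₄, hs, hp, hu, hc, hind⟩ := leviT hsym h
    obtain ⟨f', g', hr₂, hr₄, hfg, hind'⟩ := ih r₂ r₄ hc.symm
    refine ⟨fun i => if i = 0 then r₁ else f' (i - 1), fun i => if i = 0 then r₃ else g' (i - 1),
      ?_, ?_, ?_, ?_⟩
    · rw [prodL_succ_left]
      simp only [if_pos rfl]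
      rw [hs, hr₂]
      congr 1
    · rw [prodL_succ_left]
      simp only [if_pos rfl]
      rw [hp, hr₄]
      congr 1
    · intro i hi
      rcases Nat.eq_zero_or_pos i with rfl | hpos
      · simpa using hu.symm
      · have : i ≠ 0 := by omega
        simp only [if_neg this]
        exact hfg (i - 1) (by omega)
    · intro i j hij hj a ha b hb
      rcases Nat.eq_zero_or_pos i with rfl | hpos
      · -- g 0 = r₃, f j = f' (j-1), letters of f' (j-1) are in r₂
        simp only [if_pos rfl] at ha
        have hj0 : j ≠ 0 := by omega
        simp only [if_neg hj0] at hb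
        have hbr₂ : b ∈ msT r₂ := by
          rw [hr₂]; exact mem_msT_prodL (by omega) hb
        exact hsym _ _ (hind b hbr₂ a ha)
      · have hi0 : i ≠ 0 := by omega
        have hj0 : j ≠ 0 := by omega
        simp only [if_neg hi0] at ha
        simp only [if_neg hj0] at hb
        exact hind' (i - 1) (j - 1) (by omega) (by omega) a ha b hb

/-- The alphabet of a trace. -/
noncomputable def alphT (t : Trace A I) : Finset A :=
  @Multiset.toFinset A (Classical.decEq A) (msT t)

theorem mem_alphT {a : A} {t : Trace A I} : a ∈ alphT t ↔ a ∈ msT t :=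
  @Multiset.mem_toFinset A (Classical.decEq A) _ _

theorem core (hirr : ∀ a, ¬ I a a) (hsym : ∀ a b, I a b → I b a) [Fintype A] {u : Trace A I}
    (hconn : TraceConnected A I u) {c : ℕ} {s p : Trace A I}
    (h : s * p = u ^ c) (hs : ∀ s', s ≠ u * s') (hp : ∀ p', p ≠ p' * u) :
    c ≤ Fintype.card A := by
  rcases Nat.eq_zero_or_pos c with rfl | hc0
  · exact Nat.zero_le _
  obtain ⟨f, g, hsf, hpg, hfg, hind⟩ := decomp hsym u c s p h
  have fact1 : ∀ i, i < c → msT (f i) + msT (g i) = msT u := by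
    intro i hi; rw [← msT_mul, hfg i hi]
  have disj : ∀ i j, i < j → j < c → ∀ a, a ∈ msT (g i) → a ∈ msT (f j) → False := by
    intro i j hij hj a ha hb
    exact hirr a (hind i j hij hj a ha a hb)
  have chainF : ∀ i, i + 1 < c → ∀ a, a ∈ msT (f (i + 1)) → a ∈ msT (f i) := by
    intro i hi a ha
    have hu : a ∈ msT u := by
      rw [← fact1 (i + 1) hi, Multiset.mem_add]; exact Or.inl ha
    rw [← fact1 i (by omega), Multiset.mem_add] at hu
    rcases hu with h' | h'
    · exact h'
    · exact absurd ha (fun hb => disj i (i + 1) (by omega) hi a h' hb)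
  have chainG : ∀ i, i + 1 < c → ∀ a, a ∈ msT (g i) → a ∈ msT (g (i + 1)) := by
    intro i hi a ha
    have hu : a ∈ msT u := by
      rw [← fact1 i (by omega), Multiset.mem_add]; exact Or.inr ha
    rw [← fact1 (i + 1) hi, Multiset.mem_add] at hu
    rcases hu with h' | h'
    · exact absurd h' (fun hb => disj i (i + 1) (by omega) hi a ha hb)
    · exact h'
  have monoF : ∀ j k, j ≤ k → k < c → ∀ a, a ∈ msT (f k) → a ∈ msT (f j) := by
    intro j k hjk
    induction k, hjk using Nat.le_induction with
    | base => exact fun _ _ ha => ha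
    | succ k hjk ih =>
      intro hk a ha
      exact ih (by omega) a (chainF k hk a ha)
  have monoG : ∀ j k, j ≤ k → k < c → ∀ a, a ∈ msT (g j) → a ∈ msT (g k) := by
    intro j k hjk
    induction k, hjk using Nat.le_induction with
    | base => exact fun _ _ ha => ha
    | succ k hjk ih =>
      intro hk a ha
      exact chainG k hk a (ih (by omega) a ha)
  have gne : ∀ i, i < c → g i ≠ 1 := by
    intro i hi hgi
    have hg0 : msT (g 0) = 0 := by
      apply Multiset.eq_zero_of_forall_notMem
      intro a ha
      have := monoG 0 i (Nat.zero_le i) hi a ha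
      rw [hgi, msT_one] at this
      simp at this
    have hg01 : g 0 = 1 := eq_one_iff_msT.mpr hg0
    have hf0 : f 0 = u := by
      have := hfg 0 hc0
      rwa [hg01, mul_one] at this
    obtain ⟨c', rfl⟩ : ∃ c', c = c' + 1 := ⟨c - 1, by omega⟩
    exact hs (prodL c' fun i => f (i + 1)) (by rw [hsf, prodL_succ_left, hf0])
  have fne : ∀ i, i < c → f i ≠ 1 := by
    intro i hi hfi
    have hfl : msT (f (c - 1)) = 0 := by
      apply Multiset.eq_zero_of_forall_notMem
      intro a ha
      have := monoF i (c - 1) (by omega) (by omega) a ha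
      rw [hfi, msT_one] at this
      simp at this
    have hfl1 : f (c - 1) = 1 := eq_one_iff_msT.mpr hfl
    have hgl : g (c - 1) = u := by
      have := hfg (c - 1) (by omega)
      rwa [hfl1, one_mul] at this
    obtain ⟨c', rfl⟩ : ∃ c', c = c' + 1 := ⟨c - 1, by omega⟩
    simp only [Nat.add_sub_cancel] at hgl
    exact hp (prodL c' g) (by rw [hpg, prodL_succ_right, hgl])
  have ssub : ∀ i, i + 1 < c → alphT (f (i + 1)) ⊂ alphT (f i) := by
    intro i hi
    rw [Finset.ssubset_iff_subset_ne]
    constructor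
    · intro a ha
      rw [mem_alphT] at ha ⊢
      exact chainF i hi a ha
    · intro heq
      have hti : TraceIndep A I (f i) (g i) := by
        intro w w' hw hw' a haw b hbw'
        have ha : a ∈ msT (f i) := by rw [hw, msT_trc]; exact Multiset.mem_coe.mpr haw
        have hb : b ∈ msT (g i) := by rw [hw', msT_trc]; exact Multiset.mem_coe.mpr hbw'
        have ha' : a ∈ msT (f (i + 1)) := by
          have : a ∈ alphT (f (i + 1)) := by rw [heq, mem_alphT]; exact ha
          rwa [mem_alphT] at this
        exact hsym _ _ (hind i (i + 1) (by omega) hi b hb a ha')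
      rcases hconn (f i) (g i) (hfg i (by omega)).symm hti with h' | h'
      · exact fne i (by omega) h'
      · exact gne i (by omega) h'
  have cards : ∀ i, i < c → (alphT (f i)).card + i ≤ (alphT (f 0)).card := by
    intro i
    induction i with
    | zero => intro _; omega
    | succ i ih =>
      intro hi
      have h1 := Finset.card_lt_card (ssub i hi)
      have h2 := ih (by omega)
      omega
  have hlast : 1 ≤ (alphT (f (c - 1))).card := by
    rw [Nat.one_le_iff_ne_zero, Ne, Finset.card_eq_zero]
    intro hemp
    apply fne (c - 1) (by omega)
    rw [eq_one_iff_msT]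
    apply Multiset.eq_zero_of_forall_notMem
    intro a ha
    have : a ∈ alphT (f (c - 1)) := mem_alphT.mpr ha
    simp [hemp] at this
  have hcards := cards (c - 1) (by omega)
  have hle : (alphT (f 0)).card ≤ Fintype.card A := by
    simpa using Finset.card_le_univ (alphT (f 0))
  omega

/-- The length of a trace. -/
noncomputable def lenT (t : Trace A I) : ℕ := Multiset.card (msT t)

theorem lenT_mul (s t : Trace A I) : lenT (s * t) = lenT s + lenT t := by
  rw [lenT, msT_mul]; simp [lenT]

theorem lenT_pow (u : Trace A I) (n : ℕ) : lenT (u ^ n) = n * lenT u := by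
  induction n with
  | zero => simp [lenT, pow_zero, msT_one]
  | succ n ih => rw [pow_succ, lenT_mul, ih]; ring

theorem lenT_pos {u : Trace A I} (hu : u ≠ 1) : 1 ≤ lenT u := by
  rw [Nat.one_le_iff_ne_zero, lenT, Ne, Multiset.card_eq_zero]
  exact fun h => hu (eq_one_iff_msT.mpr h)

end TraceAux

open TraceAux

/-- Factorizations of a power of a connected trace into two factors. -/
theorem power_factorization_two (A : Type) [Fintype A] (I : A → A → Prop)
    (hirr : ∀ a, ¬ I a a) (hsym : ∀ a b, I a b → I b a)
    (u : Trace A I) (hu : u ≠ 1) (hconn : TraceConnected A I u)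
    (x : ℕ) (y₁ y₂ : Trace A I) :
    u ^ x = y₁ * y₂ ↔
      ∃ (l k c : ℕ) (s p : Trace A I),
        y₁ = u ^ l * s ∧ y₂ = p * u ^ k ∧ s * p = u ^ c ∧
        l + k + c = x ∧ c ≤ Fintype.card A := by
  constructor
  · intro h
    classical
    have hL : 1 ≤ lenT u := lenT_pos hu
    -- maximal l with y₁ = u^l * s
    have hb1 : ∀ n (s' : Trace A I), y₁ = u ^ n * s' → n ≤ lenT y₁ := by
      intro n s' hy
      have h1 : lenT y₁ = n * lenT u + lenT s' := by rw [hy, lenT_mul, lenT_pow]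
      have h2 : n ≤ n * lenT u := Nat.le_mul_of_pos_right n (by omega)
      omega
    have hb2 : ∀ n (p' : Trace A I), y₂ = p' * u ^ n → n ≤ lenT y₂ := by
      intro n p' hy
      have h1 : lenT y₂ = lenT p' + n * lenT u := by rw [hy, lenT_mul, lenT_pow]
      have h2 : n ≤ n * lenT u := Nat.le_mul_of_pos_right n (by omega)
      omega
    set P : ℕ → Prop := fun n => ∃ s', y₁ = u ^ n * s' with hP
    set Q : ℕ → Prop := fun n => ∃ p', y₂ = p' * u ^ n with hQ
    set l := Nat.findGreatest P (lenT y₁) with hl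
    set k := Nat.findGreatest Q (lenT y₂) with hk
    obtain ⟨s, hsdef⟩ : P l :=
      Nat.findGreatest_spec (Nat.zero_le _) ⟨y₁, by simp⟩
    obtain ⟨p, hpdef⟩ : Q k :=
      Nat.findGreatest_spec (Nat.zero_le _) ⟨y₂, by simp⟩
    have hmaxl : ∀ s' : Trace A I, y₁ ≠ u ^ (l + 1) * s' := by
      intro s' hy
      have h1 : l + 1 ≤ l := Nat.le_findGreatest (hb1 _ _ hy) ⟨s', hy⟩
      omega
    have hmaxk : ∀ p' : Trace A I, y₂ ≠ p' * u ^ (k + 1) := by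
      intro p' hy
      have h1 : k + 1 ≤ k := Nat.le_findGreatest (hb2 _ _ hy) ⟨p', hy⟩
      omega
    -- length accounting
    have hlen : x * lenT u = l * lenT u + lenT s + (lenT p + k * lenT u) := by
      have := congrArg lenT h
      rw [lenT_pow, lenT_mul, hsdef, hpdef, lenT_mul, lenT_mul, lenT_pow, lenT_pow] at this
      omega
    have hlk : l + k ≤ x := by
      have h1 : (l + k) * lenT u ≤ x * lenT u := by
        have : (l + k) * lenT u = l * lenT u + k * lenT u := by ring
        omega
      exact Nat.le_of_mul_le_mul_right h1 (by omega)
    set c := x - l - k with hc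
    have hxc : x = l + (c + k) := by omega
    have hkey : u ^ l * (s * p * u ^ k) = u ^ l * (u ^ c * u ^ k) := by
      have h1 : u ^ l * (s * p * u ^ k) = (u ^ l * s) * (p * u ^ k) := by
        rw [mul_assoc s p, ← mul_assoc]
      have h2 : u ^ l * (u ^ c * u ^ k) = u ^ x := by
        rw [← pow_add, ← pow_add, ← hxc]
      rw [h1, ← hsdef, ← hpdef, h2, h]
    have hsp : s * p = u ^ c := by
      have h1 : s * p * u ^ k = u ^ c * u ^ k := mul_left_cancelT hirr hsym hkey
      exact mul_right_cancelT hirr hsym h1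
    have hcard : c ≤ Fintype.card A := by
      refine core hirr hsym hconn hsp ?_ ?_
      · intro s' hseq
        refine hmaxl s' ?_
        rw [hsdef, hseq, pow_succ, mul_assoc]
      · intro p' hpeq
        refine hmaxk p' ?_
        rw [hpdef, hpeq, pow_succ', mul_assoc]
    exact ⟨l, k, c, s, p, hsdef, hpdef, hsp, by omega, hcard⟩
  · rintro ⟨l, k, c, s, p, h1, h2, h3, h4, h5⟩
    rw [h1, h2, mul_assoc, ← mul_assoc s, h3, ← pow_add, ← pow_add]
    congr 1
    omega
end

section
/- Let u ∈ M(A,I) be a nonempty connected trace, m ≥ 2, x ∈ ℕ, and y₁,...,y_m traces with u^x = y₁y₂⋯y_m. Then there exist traces p_{i,j} (1 ≤ j < i ≤ m), s_i (1 ≤ i ≤ m) and numbers x_i, c_j ∈ ℕ such that: y_i = (∏_{j=1}^{i-1} p_{i,j}) u^{x_i} s_i for all i; p_{i,j} I p_{k,ℓ} whenever j < ℓ < k < i, and p_{i,j} I (u^{x_k} s_k) whenever j < k < i; s_m = 1, and s_j ∏_{i=j+1}^m p_{i,j} = u^{c_j} with c_j ≤ |A| for all 1 ≤ j < m; and x =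 Σ_{i=1}^m x_i + Σ_{j=1}^{m-1} c_j. -/
namespace TraceWork
open List

attribute [local instance] Classical.propDecidable

variable {A : Type} {I : A → A → Prop}

lemma trc_surj : Function.Surjective (trc A I) := Con.mk'_surjective

lemma trc_eq_iff {w w' : FreeMonoid A} :
    trc A I w = trc A I w' ↔ ConGen.Rel (traceRel A I) w w' := by
  constructor
  · intro h
    have : (traceCon A I) w w' := by
      rw [← Con.eq]
      simpa [trc, Con.coe_mk'] using h
    exact this
  · intro h
    have : (traceCon A I) w w' := h
    simpa [trc, Con.coe_mk'] using ((traceCon A I).eq).2 this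

lemma trc_mul (w w' : FreeMonoid A) :
    trc A I (w * w') = trc A I w * trc A I w' := by
  simp [trc, map_mul]

lemma trc_nil : trc A I (1 : FreeMonoid A) = 1 := by simp [trc]

/-- invariance of the letter multiset -/
lemma alph_inv {w w' : FreeMonoid A} (h : ConGen.Rel (traceRel A I) w w') :
    ((FreeMonoid.toList w : List A) : Multiset A) = (FreeMonoid.toList w' : List A) := by
  induction h with
  | of x y hxy =>
    obtain ⟨a, b, hI, hx, hy⟩ := hxy
    subst hx; subst hy
    show (([a, b] : List A) : Multiset A) = (([b, a] : List A) : Multiset A)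
    rw [Multiset.coe_eq_coe]
    exact List.Perm.swap b a []
  | refl x => rfl
  | symm _ ih => exact ih.symm
  | trans _ _ ih1 ih2 => exact ih1.trans ih2
  | mul _ _ ih1 ih2 =>
    show ((_ ++ _ : List A) : Multiset A) = ((_ ++ _ : List A) : Multiset A)
    rw [← Multiset.coe_add, ← Multiset.coe_add, ih1, ih2]

/-- multiset of letters of a trace -/
def alphT (t : Trace A I) : Multiset A :=
  Quotient.liftOn t (fun w => ((FreeMonoid.toList w : List A) : Multiset A))
    (fun _ _ h => alph_inv h)

lemma alphT_trc (w : FreeMonoid A) : alphT (trc A I w) = (FreeMonoid.toList w : Multiset A) := rfl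

lemma alphT_mul (s t : Trace A I) : alphT (s * t) = alphT s + alphT t := by
  obtain ⟨w, rfl⟩ := trc_surj (I := I) s
  obtain ⟨w', rfl⟩ := trc_surj (I := I) t
  rw [← trc_mul]
  show ((_ ++ _ : List A) : Multiset A) = _
  rw [← Multiset.coe_add]
  rfl

lemma alphT_one : alphT (1 : Trace A I) = 0 := rfl

lemma alphT_eq_zero {s : Trace A I} (h : alphT s = 0) : s = 1 := by
  obtain ⟨w, rfl⟩ := trc_surj (I := I) s
  rw [alphT_trc] at h
  have h2 : FreeMonoid.toList w = [] := by
    have := congrArg Multiset.card h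
    simpa using List.length_eq_zero_iff.1 (by simpa using this)
  have : w = 1 := h2
  rw [this, trc_nil]

lemma alphT_pow (s : Trace A I) (n : ℕ) : alphT (s ^ n) = n • alphT s := by
  induction n with
  | zero => simp [alphT_one]
  | succ n ih => rw [pow_succ, alphT_mul, ih, succ_nsmul]

lemma mul_eq_one {s t : Trace A I} (h : s * t = 1) : s = 1 ∧ t = 1 := by
  have h0 := congrArg alphT h
  rw [alphT_mul, alphT_one] at h0
  have hc := congrArg Multiset.card h0
  rw [Multiset.card_add] at hc
  simp only [Multiset.card_zero] at hc
  constructor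
  · exact alphT_eq_zero (Multiset.card_eq_zero.1 (by omega))
  · exact alphT_eq_zero (Multiset.card_eq_zero.1 (by omega))


/-! ### word-level interface -/

/-- trace of a list -/
def tw (I : A → A → Prop) (w : List A) : Trace A I := trc A I (FreeMonoid.ofList w)

lemma tw_append (l₁ l₂ : List A) : tw I (l₁ ++ l₂) = tw I l₁ * tw I l₂ := by
  show trc A I (FreeMonoid.ofList l₁ * FreeMonoid.ofList l₂) = _
  rw [trc_mul]; rfl

lemma tw_nil : tw I ([] : List A) = 1 := trc_nil

lemma tw_surj (s : Trace A I) : ∃ w : List A, s = tw I w := by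
  obtain ⟨w, rfl⟩ := trc_surj (I := I) s
  exact ⟨FreeMonoid.toList w, rfl⟩

lemma alphT_tw (w : List A) : alphT (tw I w) = (w : Multiset A) := rfl

lemma tw_eq_iff {w w' : List A} :
    tw I w = tw I w' ↔ ConGen.Rel (traceRel A I) (FreeMonoid.ofList w) (FreeMonoid.ofList w') :=
  trc_eq_iff

lemma tw_cons (a : A) (l : List A) : tw I (a :: l) = tw I [a] * tw I l := by
  have : a :: l = [a] ++ l := rfl
  rw [this, tw_append]

/-- independence of letter multisets -/
def IndM (I : A → A → Prop) (X Y : Multiset A) : Prop := ∀ a ∈ X, ∀ b ∈ Y, I a b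

lemma IndM.mono {X Y X' Y' : Multiset A} (h : IndM I X Y) (hX : X' ≤ X) (hY : Y' ≤ Y) :
    IndM I X' Y' := fun a ha b hb => h a (Multiset.subset_of_le hX ha) b (Multiset.subset_of_le hY hb)

lemma IndM.symm (hsym : ∀ a b, I a b → I b a) {X Y : Multiset A} (h : IndM I X Y) :
    IndM I Y X := fun a ha b hb => hsym _ _ (h b hb a ha)

/-! ### projections -/

/-- projection to the letters a, b -/
noncomputable def pr (a b : A) (l : List A) : List A :=
  l.filter (fun c => decide (c = a ∨ c = b))

lemma pr_append (a b : A) (l₁ l₂ : List A) :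
    pr a b (l₁ ++ l₂) = pr a b l₁ ++ pr a b l₂ := List.filter_append ..

lemma pr_cons_self (a b : A) (l : List A) : pr a b (a :: l) = a :: pr a b l := by
  simp [pr]

lemma pr_cons_of_ne (a b c : A) (l : List A) (h1 : c ≠ a) (h2 : c ≠ b) :
    pr a b (c :: l) = pr a b l := by
  simp [pr, h1, h2]

lemma mem_pr {a b c : A} {l : List A} :
    c ∈ pr a b l ↔ c ∈ l ∧ (c = a ∨ c = b) := by
  simp [pr]

/-- projections are invariant under the trace congruence -/
lemma pr_eq_of_rel (hirr : ∀ a, ¬ I a a) (hsym : ∀ a b, I a b → I b a)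
    {w w' : FreeMonoid A} (h : ConGen.Rel (traceRel A I) w w')
    {a b : A} (hnI : ¬ I a b) :
    pr a b (FreeMonoid.toList w) = pr a b (FreeMonoid.toList w') := by
  induction h with
  | of x y hxy =>
    obtain ⟨c, d, hI, hx, hy⟩ := hxy
    subst hx; subst hy
    show pr a b [c, d] = pr a b [d, c]
    have hcd : c ≠ d := by rintro rfl; exact hirr c hI
    by_cases hc : c = a ∨ c = b
    · have hd : ¬ (d = a ∨ d = b) := by
        rintro (rfl | rfl) <;> rcases hc with rfl | rfl
        · exact hcd rfl
        · exact hnI (hsym _ _ hI)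
        · exact hnI hI
        · exact hcd rfl
      simp [pr, hc, hd]
    · by_cases hd : d = a ∨ d = b
      · simp [pr, hc, hd]
      · simp [pr, hc, hd]
  | refl x => rfl
  | symm _ ih => exact ih.symm
  | trans _ _ ih1 ih2 => exact ih1.trans ih2
  | mul _ _ ih1 ih2 =>
    show pr a b (_ ++ _) = pr a b (_ ++ _)
    rw [pr_append, pr_append, ih1, ih2]

lemma pr_eq_of_tw (hirr : ∀ a, ¬ I a a) (hsym : ∀ a b, I a b → I b a)
    {w w' : List A} (h : tw I w = tw I w') {a b : A} (hnI : ¬ I a b) :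
    pr a b w = pr a b w' :=
  pr_eq_of_rel hirr hsym (tw_eq_iff.1 h) hnI

/-- commuting a letter across an independent block -/
lemma cmute {a : A} {w₁ w₂ : List A} (h : ∀ b ∈ w₁, I a b) :
    tw I (a :: (w₁ ++ w₂)) = tw I (w₁ ++ a :: w₂) := by
  induction w₁ generalizing w₂ with
  | nil => rfl
  | cons c w₁ ih =>
    show tw I (a :: c :: (w₁ ++ w₂)) = tw I (c :: (w₁ ++ a :: w₂))
    have h2 : tw I [a, c] = tw I [c, a] :=
      tw_eq_iff.2 (ConGen.Rel.of _ _ ⟨a, c, h c (by simp), rfl, rfl⟩)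
    calc tw I (a :: c :: (w₁ ++ w₂)) = tw I [a,c] * tw I (w₁ ++ w₂) := tw_append [a,c] (w₁++w₂)
      _ = tw I [c,a] * tw I (w₁ ++ w₂) := by rw [h2]
      _ = tw I (c :: a :: (w₁ ++ w₂)) := (tw_append [c,a] (w₁++w₂)).symm
      _ = tw I [c] * tw I (a :: (w₁ ++ w₂)) := tw_append [c] _
      _ = tw I [c] * tw I (w₁ ++ a :: w₂) := by rw [ih (fun b hb => h b (by simp [hb]))]
      _ = tw I (c :: (w₁ ++ a :: w₂)) := (tw_append [c] _).symm

/-- commuting independent blocks -/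
lemma comm_blocks {l₁ l₂ : List A} (h : ∀ a ∈ l₁, ∀ b ∈ l₂, I a b) :
    tw I (l₁ ++ l₂) = tw I (l₂ ++ l₁) := by
  induction l₁ with
  | nil => simp
  | cons a l₁ ih =>
    show tw I (a :: (l₁ ++ l₂)) = tw I (l₂ ++ a :: l₁)
    calc tw I (a :: (l₁ ++ l₂)) = tw I [a] * tw I (l₁ ++ l₂) := tw_append [a] _
      _ = tw I [a] * tw I (l₂ ++ l₁) := by rw [ih (fun x hx => h x (by simp [hx]))]
      _ = tw I (a :: (l₂ ++ l₁)) := (tw_append [a] _).symm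
      _ = tw I (l₂ ++ a :: l₁) := cmute (fun b hb => h a (by simp) b hb)

lemma comm_of_indM {s t : Trace A I} (h : IndM I (alphT s) (alphT t)) : s * t = t * s := by
  obtain ⟨w, rfl⟩ := tw_surj s
  obtain ⟨w', rfl⟩ := tw_surj t
  rw [← tw_append, ← tw_append]
  exact comm_blocks (fun a ha b hb => h a (by rwa [alphT_tw, Multiset.mem_coe]) b
    (by rwa [alphT_tw, Multiset.mem_coe]))


/-! ### first occurrence, projection lemma, cancellation, Levi -/

lemma first_occ_split {a : A} {l : List A} (h : a ∈ l) :
    ∃ s t, l = s ++ a :: t ∧ a ∉ s := by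
  induction l with
  | nil => cases h
  | cons c l ih =>
    by_cases hc : c = a
    · subst hc; exact ⟨[], l, rfl, by simp⟩
    · have h' : a ∈ l := by
        rcases List.mem_cons.1 h with h | h
        · exact absurd h.symm hc
        · exact h
      obtain ⟨s, t, rfl, hns⟩ := ih h'
      exact ⟨c :: s, t, rfl, by
        simp only [List.mem_cons, not_or]
        exact ⟨fun h => hc h.symm, hns⟩⟩

lemma pr_cons_of_mem {a b c : A} (l : List A) (h : c = a ∨ c = b) :
    pr a b (c :: l) = c :: pr a b l := by
  rcases h with rfl | rfl
  · exact pr_cons_self ..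
  · by_cases hca : c = a
    · subst hca; exact pr_cons_self ..
    · simp [pr, hca]

lemma head_indep {a : A} {v w₁ w₂ : List A} (hnotin : a ∉ w₁)
    (hpr : ∀ c d, ¬ I c d → pr c d (a :: v) = pr c d (w₁ ++ a :: w₂)) :
    ∀ b ∈ w₁, I a b := by
  intro b hb
  by_contra hnI
  have heq := hpr a b hnI
  rw [pr_cons_self, pr_append, pr_cons_self] at heq
  cases hw : pr a b w₁ with
  | nil =>
    have : b ∈ pr a b w₁ := mem_pr.2 ⟨hb, Or.inr rfl⟩
    rw [hw] at this; simp at this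
  | cons c cs =>
    rw [hw] at heq
    have hc : c ∈ pr a b w₁ := by rw [hw]; simp
    obtain ⟨hcw, hccd⟩ := mem_pr.1 hc
    have hca : c ≠ a := fun h => hnotin (h ▸ hcw)
    have : a = c := by
      have := heq
      rw [List.cons_append] at this
      exact (List.cons.injEq _ _ _ _ ▸ this).1
    exact hca this.symm

lemma tail_pr (hsym : ∀ a b, I a b → I b a) {a : A} {v w₁ w₂ : List A}
    (hnotin : a ∉ w₁) (hind : ∀ b ∈ w₁, I a b)
    (hpr : ∀ c d, ¬ I c d → pr c d (a :: v) = pr c d (w₁ ++ a :: w₂)) :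
    ∀ c d, ¬ I c d → pr c d v = pr c d (w₁ ++ w₂) := by
  intro c d hncd
  have heq := hpr c d hncd
  by_cases hac : a = c ∨ a = d
  · have hw1 : pr c d w₁ = [] := by
      rw [List.eq_nil_iff_forall_not_mem]
      intro x hx
      obtain ⟨hxw, hxcd⟩ := mem_pr.1 hx
      have hxa : x ≠ a := fun h => hnotin (h ▸ hxw)
      have hIax : I a x := hind x hxw
      rcases hac with rfl | rfl <;> rcases hxcd with rfl | rfl
      · exact hxa rfl
      · exact hncd hIax
      · exact hncd (hsym _ _ hIax)
      · exact hxa rfl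
    rw [pr_cons_of_mem _ (by tauto), pr_append, pr_cons_of_mem _ (by tauto), hw1] at heq
    rw [pr_append, hw1]
    simpa using heq
  · push_neg at hac
    rw [pr_cons_of_ne _ _ _ _ hac.1 hac.2, pr_append,
      pr_cons_of_ne _ _ _ _ hac.1 hac.2] at heq
    rw [pr_append]
    exact heq

lemma tw_eq_of_pr (hirr : ∀ a, ¬ I a a) (hsym : ∀ a b, I a b → I b a) :
    ∀ (w w' : List A), (∀ a b, ¬ I a b → pr a b w = pr a b w') → tw I w = tw I w' := by
  intro w
  induction w with
  | nil =>
    intro w' h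
    have hw' : w' = [] := by
      rw [List.eq_nil_iff_forall_not_mem]
      intro c hc
      have h1 := h c c (hirr c)
      have hcmem : c ∈ pr c c w' := mem_pr.2 ⟨hc, Or.inl rfl⟩
      rw [← h1] at hcmem; simp [pr] at hcmem
    rw [hw']
  | cons a v ih =>
    intro w' h
    have ha : a ∈ w' := by
      have h1 := h a a (hirr a)
      rw [pr_cons_self] at h1
      have : a ∈ pr a a w' := by rw [← h1]; simp
      exact (mem_pr.1 this).1
    obtain ⟨w₁, w₂, rfl, hnotin⟩ := first_occ_split ha
    have hind := head_indep hnotin h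
    have htail := tail_pr hsym hnotin hind h
    have hIH := ih (w₁ ++ w₂) htail
    calc tw I (a :: v) = tw I [a] * tw I v := tw_append [a] v
      _ = tw I [a] * tw I (w₁ ++ w₂) := by rw [hIH]
      _ = tw I (a :: (w₁ ++ w₂)) := (tw_append [a] _).symm
      _ = tw I (w₁ ++ a :: w₂) := cmute hind

lemma tcancel_left (hirr : ∀ a, ¬ I a a) (hsym : ∀ a b, I a b → I b a)
    {s t t' : Trace A I} (h : s * t = s * t') : t = t' := by
  obtain ⟨w, rfl⟩ := tw_surj s
  obtain ⟨v, rfl⟩ := tw_surj t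
  obtain ⟨v', rfl⟩ := tw_surj t'
  rw [← tw_append, ← tw_append] at h
  apply tw_eq_of_pr hirr hsym
  intro a b hab
  have h1 := pr_eq_of_tw hirr hsym h hab
  rw [pr_append, pr_append] at h1
  exact List.append_cancel_left h1

lemma tcancel_right (hirr : ∀ a, ¬ I a a) (hsym : ∀ a b, I a b → I b a)
    {s t t' : Trace A I} (h : t * s = t' * s) : t = t' := by
  obtain ⟨w, rfl⟩ := tw_surj s
  obtain ⟨v, rfl⟩ := tw_surj t
  obtain ⟨v', rfl⟩ := tw_surj t'
  rw [← tw_append, ← tw_append] at h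
  apply tw_eq_of_pr hirr hsym
  intro a b hab
  have h1 := pr_eq_of_tw hirr hsym h hab
  rw [pr_append, pr_append] at h1
  exact List.append_cancel_right h1

lemma letter_div (hirr : ∀ a, ¬ I a a) (hsym : ∀ a b, I a b → I b a)
    {a : A} {x s t : Trace A I} (h : tw I [a] * x = s * t) :
    (∃ s', s = tw I [a] * s' ∧ x = s' * t) ∨
    ((∀ b ∈ alphT s, I a b) ∧ ∃ t', t = tw I [a] * t' ∧ x = s * t') := by
  obtain ⟨xw, rfl⟩ := tw_surj x
  obtain ⟨vs, rfl⟩ := tw_surj s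
  obtain ⟨vt, rfl⟩ := tw_surj t
  rw [← tw_append, ← tw_append] at h
  have hpr : ∀ c d, ¬ I c d → pr c d ([a] ++ xw) = pr c d (vs ++ vt) :=
    fun c d hcd => pr_eq_of_tw hirr hsym h hcd
  have ha : a ∈ vs ++ vt := by
    have h1 := hpr a a (hirr a)
    have : a ∈ pr a a (vs ++ vt) := by rw [← h1]; simp [pr]
    exact (mem_pr.1 this).1
  obtain ⟨W₁, W₂, hW, hnotin⟩ := first_occ_split ha
  have hpr' : ∀ c d, ¬ I c d → pr c d (a :: xw) = pr c d (W₁ ++ a :: W₂) := by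
    intro c d hcd; rw [← hW]; exact hpr c d hcd
  have hind : ∀ b ∈ W₁, I a b := head_indep hnotin hpr'
  have htail := tail_pr hsym hnotin hind hpr'
  have hx : tw I xw = tw I (W₁ ++ W₂) := tw_eq_of_pr hirr hsym _ _ htail
  rcases List.append_eq_append_iff.1 hW with ⟨k, hW₁, hvt⟩ | ⟨k, hvs, hk⟩
  · -- a is in t: W₁ = vs ++ k, vt = k ++ a :: W₂
    right
    have hsub : ∀ b ∈ alphT (tw I vs), I a b := by
      intro b hb
      rw [alphT_tw, Multiset.mem_coe] at hb
      exact hind b (by rw [hW₁]; exact List.mem_append_left _ hb)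
    refine ⟨hsub, tw I (k ++ W₂), ?_, ?_⟩
    · have hkind : ∀ b ∈ k, I a b := fun b hb => hind b (by rw [hW₁]; exact List.mem_append_right _ hb)
      rw [hvt, ← cmute hkind]
      exact tw_append [a] (k ++ W₂)
    · rw [hx, hW₁]
      have : vs ++ k ++ W₂ = vs ++ (k ++ W₂) := by simp
      rw [this, tw_append]
  · cases k with
    | nil =>
      right
      simp only [List.append_nil] at hvs
      have hvt : vt = a :: W₂ := by simpa using hk.symm
      have hsub : ∀ b ∈ alphT (tw I vs), I a b := by
        intro b hb
        rw [alphT_tw, Multiset.mem_coe] at hb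
        exact hind b (hvs ▸ hb)
      refine ⟨hsub, tw I W₂, ?_, ?_⟩
      · rw [hvt]; exact tw_append [a] W₂
      · rw [hx, hvs, tw_append]
    | cons a' k' =>
      left
      have ha' : a' = a ∧ W₂ = k' ++ vt := by
        have := hk
        rw [List.cons_append] at this
        exact ⟨((List.cons.injEq _ _ _ _ ▸ this).1).symm, (List.cons.injEq _ _ _ _ ▸ this).2⟩
      obtain ⟨ha1, hW₂⟩ := ha'
      rw [ha1] at hvs
      refine ⟨tw I (W₁ ++ k'), ?_, ?_⟩
      · rw [hvs, ← cmute hind]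
        exact tw_append [a] (W₁ ++ k')
      · rw [hx, hW₂]
        have : W₁ ++ (k' ++ vt) = (W₁ ++ k') ++ vt := by simp
        rw [this, tw_append]

lemma alphT_single (a : A) : alphT (tw I [a]) = {a} := by
  rw [alphT_tw]; rfl

lemma levi_word (hirr : ∀ a, ¬ I a a) (hsym : ∀ a b, I a b → I b a) :
    ∀ (xw : List A) (y z t : Trace A I),
    tw I xw * y = z * t →
    ∃ r v w s, tw I xw = r * v ∧ z = r * w ∧ y = w * s ∧ t = v * s ∧
      IndM I (alphT v) (alphT w) := by
  intro xw
  induction xw with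
  | nil =>
    intro y z t h
    rw [tw_nil, one_mul] at h
    exact ⟨1, 1, z, t, by rw [tw_nil, one_mul], (one_mul z).symm, h, (one_mul t).symm,
      by rw [alphT_one]; intro p hp; cases hp⟩  -- membership in 0
  | cons a xw ih =>
    intro y z t h
    have h' : tw I [a] * (tw I xw * y) = z * t := by
      rw [← mul_assoc, ← tw_append]; exact h
    rcases letter_div hirr hsym h' with ⟨z', hz, hxeq⟩ | ⟨hzind, t', ht, hxeq⟩
    · obtain ⟨r, v, w, s, h1, h2, h3, h4, h5⟩ := ih y z' t hxeq
      refine ⟨tw I [a] * r, v, w, s, ?_, ?_, h3, h4, h5⟩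
      · rw [show ((a :: xw) : List A) = [a] ++ xw from rfl, tw_append, h1, mul_assoc]
      · rw [hz, h2, mul_assoc]
    · obtain ⟨r, v, w, s, h1, h2, h3, h4, h5⟩ := ih y z t' hxeq
      have hra : IndM I (alphT (tw I [a])) (alphT r) := by
        intro p hp b hb
        rw [alphT_single, Multiset.mem_singleton] at hp
        subst hp
        exact hzind b (by rw [h2, alphT_mul]; exact Multiset.mem_add.2 (Or.inl hb))
      refine ⟨r, tw I [a] * v, w, s, ?_, h2, h3, ?_, ?_⟩
      · calc tw I (a :: xw) = tw I [a] * tw I xw := tw_append [a] xw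
          _ = tw I [a] * (r * v) := by rw [h1]
          _ = (tw I [a] * r) * v := by rw [mul_assoc]
          _ = (r * tw I [a]) * v := by rw [comm_of_indM hra]
          _ = r * (tw I [a] * v) := by rw [mul_assoc]
      · rw [ht, h4, ← mul_assoc]
      · intro p hp b hb
        rw [alphT_mul] at hp
        rcases Multiset.mem_add.1 hp with hp | hp
        · rw [alphT_single, Multiset.mem_singleton] at hp
          subst hp
          exact hzind b (by rw [h2, alphT_mul]; exact Multiset.mem_add.2 (Or.inr hb))
        · exact h5 p hp b hb

lemma levi (hirr : ∀ a, ¬ I a a) (hsym : ∀ a b, I a b → I b a)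
    {x y z t : Trace A I} (h : x * y = z * t) :
    ∃ r v w s, x = r * v ∧ z = r * w ∧ y = w * s ∧ t = v * s ∧
      IndM I (alphT v) (alphT w) := by
  obtain ⟨xw, rfl⟩ := tw_surj x
  exact levi_word hirr hsym xw y z t h


/-! ### powers, chain decomposition, the straddling bound -/

/-- length of a trace -/
def lenT (t : Trace A I) : ℕ := Multiset.card (alphT t)

lemma lenT_mul (s t : Trace A I) : lenT (s * t) = lenT s + lenT t := by
  rw [lenT, alphT_mul, Multiset.card_add]; rfl

lemma lenT_pow (s : Trace A I) (n : ℕ) : lenT (s ^ n) = n * lenT s := by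
  induction n with
  | zero => simp [lenT, alphT_one]
  | succ n ih => rw [pow_succ, lenT_mul, ih]; ring

lemma lenT_pos {u : Trace A I} (hu : u ≠ 1) : 1 ≤ lenT u := by
  by_contra h
  push_neg at h
  unfold lenT at h
  exact hu (alphT_eq_zero (Multiset.card_eq_zero.1 (by omega)))

lemma alph_le_prod {l : List (Trace A I)} {x : Trace A I} (hx : x ∈ l) :
    alphT x ≤ alphT l.prod := by
  induction l with
  | nil => cases hx
  | cons a l ih =>
    rw [List.prod_cons, alphT_mul]
    rcases List.mem_cons.1 hx with rfl | hx
    · exact le_add_right le_rfl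
    · exact (ih hx).trans le_add_self

lemma indM_traceIndep {s t : Trace A I} (h : IndM I (alphT s) (alphT t)) :
    TraceIndep A I s t := by
  intro w w' hw hw' a ha b hb
  have h1 : a ∈ alphT s := by rw [hw]; exact Multiset.mem_coe.2 ha
  have h2 : b ∈ alphT t := by rw [hw']; exact Multiset.mem_coe.2 hb
  exact h a h1 b h2

/-- maximal power of u dividing on the left -/
lemma maxdiv_left {u : Trace A I} (hu : u ≠ 1) (s : Trace A I) :
    ∃ k s', s = u ^ k * s' ∧ ¬ ∃ w, s' = u * w := by
  set P : ℕ → Prop := fun k => ∃ w, s = u ^ k * w with hP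
  have hbound : ∀ k, P k → k ≤ lenT s := by
    rintro k ⟨w, hw⟩
    have := congrArg lenT hw
    rw [lenT_mul, lenT_pow] at this
    have h1 := lenT_pos hu
    nlinarith
  have hP0 : P 0 := ⟨s, by simp⟩
  set K := Nat.findGreatest P (lenT s) with hK
  have hPK : P K := Nat.findGreatest_spec (Nat.zero_le _) hP0
  obtain ⟨s', hs'⟩ := hPK
  refine ⟨K, s', hs', ?_⟩
  rintro ⟨w, rfl⟩
  have hPK1 : P (K + 1) := ⟨w, by rw [hs', pow_succ, mul_assoc]⟩
  have hle : K + 1 ≤ lenT s := hbound _ hPK1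
  exact Nat.findGreatest_is_greatest (Nat.lt_succ_self K) hle hPK1

lemma maxdiv_right {u : Trace A I} (hu : u ≠ 1) (t : Trace A I) :
    ∃ l t', t = t' * u ^ l ∧ ¬ ∃ w, t' = w * u := by
  set P : ℕ → Prop := fun k => ∃ w, t = w * u ^ k with hP
  have hbound : ∀ k, P k → k ≤ lenT t := by
    rintro k ⟨w, hw⟩
    have := congrArg lenT hw
    rw [lenT_mul, lenT_pow] at this
    have h1 := lenT_pos hu
    nlinarith
  have hP0 : P 0 := ⟨t, by simp⟩
  set K := Nat.findGreatest P (lenT t) with hK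
  have hPK : P K := Nat.findGreatest_spec (Nat.zero_le _) hP0
  obtain ⟨t', ht'⟩ := hPK
  refine ⟨K, t', ht', ?_⟩
  rintro ⟨w, rfl⟩
  have hPK1 : P (K + 1) := ⟨w, by
    rw [ht', pow_succ, ← mul_assoc, mul_assoc w, mul_assoc w, ← pow_succ, ← pow_succ']⟩
  have hle : K + 1 ≤ lenT t := hbound _ hPK1
  exact Nat.findGreatest_is_greatest (Nat.lt_succ_self K) hle hPK1

/-- decomposition of both factors along the copies of u -/
lemma chain (hirr : ∀ a, ¬ I a a) (hsym : ∀ a b, I a b → I b a) (u : Trace A I) :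
    ∀ (N : ℕ) (s t : Trace A I), s * t = u ^ N →
    ∃ R W : ℕ → Trace A I,
      s = ((List.range N).map R).prod ∧ t = ((List.range N).map W).prod ∧
      (∀ n, n < N → u = R n * W n) ∧
      (∀ n j, n < j → j < N → IndM I (alphT (R j)) (alphT (W n))) := by
  intro N
  induction N with
  | zero =>
    intro s t h
    rw [pow_zero] at h
    obtain ⟨hs, ht⟩ := mul_eq_one h
    exact ⟨fun _ => 1, fun _ => 1, by simp [hs], by simp [ht], by omega, by omega⟩
  | succ N ih =>
    intro s t h
    rw [pow_succ'] at h
    obtain ⟨r, v, w, σ, h1, h2, h3, h4, h5⟩ := levi hirr hsym h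
    obtain ⟨R', W', hv, hσ, hcopy, hind⟩ := ih v σ h4.symm
    refine ⟨fun n => if n = 0 then r else R' (n - 1),
            fun n => if n = 0 then w else W' (n - 1), ?_, ?_, ?_, ?_⟩
    · rw [List.range_succ_eq_map, List.map_cons, List.prod_cons, List.map_map]
      simp only [if_pos rfl]
      have : (List.range N).map ((fun n => if n = 0 then r else R' (n - 1)) ∘ Nat.succ)
          = (List.range N).map R' := by
        apply List.map_congr_left
        intro n _
        simp [Function.comp]
      rw [this, ← hv, h1]; simp
    · rw [List.range_succ_eq_map, List.map_cons, List.prod_cons, List.map_map]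
      simp only [if_pos rfl]
      have : (List.range N).map ((fun n => if n = 0 then w else W' (n - 1)) ∘ Nat.succ)
          = (List.range N).map W' := by
        apply List.map_congr_left
        intro n _
        simp [Function.comp]
      rw [this, ← hσ, h3]; simp
    · intro n hn
      cases n with
      | zero => simpa using h2
      | succ n => simpa using hcopy n (by omega)
    · intro n j hnj hj
      have hj0 : j ≠ 0 := by omega
      cases n with
      | zero =>
        simp only [if_pos rfl, if_neg hj0]
        have hle : alphT (R' (j - 1)) ≤ alphT v := by
          rw [hv]
          exact alph_le_prod (List.mem_map.2 ⟨j - 1, List.mem_range.2 (by omega), rfl⟩)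
        exact (h5.mono hle le_rfl)
      | succ n =>
        simp only [if_neg hj0, if_neg (Nat.succ_ne_zero n)]
        exact hind n (j - 1) (by omega) (by omega)

lemma straddle_bound [Fintype A] (hirr : ∀ a, ¬ I a a) (hsym : ∀ a b, I a b → I b a)
    {u : Trace A I} (hu : u ≠ 1) (hconn : TraceConnected A I u)
    {s t : Trace A I} {N : ℕ} (h : s * t = u ^ N)
    (hs : ¬ ∃ w, s = u * w) (ht : ¬ ∃ w, t = w * u) : N ≤ Fintype.card A := by
  rcases Nat.eq_zero_or_pos N with rfl | hN
  · exact Nat.zero_le _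
  obtain ⟨R, W, hR, hW, hcopy, hind⟩ := chain hirr hsym u N s t h
  set T : ℕ → Finset A := fun n => (alphT (W n)).toFinset with hT
  have halph : ∀ n, n < N → alphT (R n) + alphT (W n) = alphT u := by
    intro n hn
    rw [← alphT_mul, ← hcopy n hn]
  have hsub : ∀ n, n + 1 < N → T n ⊆ T (n + 1) := by
    intro n hn a ha
    rw [hT, Multiset.mem_toFinset] at ha ⊢
    have hau : a ∈ alphT u := by
      rw [← halph n (by omega)]
      exact Multiset.mem_add.2 (Or.inr ha)
    rw [← halph (n+1) hn] at hau
    rcases Multiset.mem_add.1 hau with h' | h'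
    · exact absurd (hind n (n+1) (by omega) hn a h' a ha) (hirr a)
    · exact h'
  have hmono : ∀ m n, m ≤ n → n < N → T m ⊆ T n := by
    intro m n hmn hn
    induction n with
    | zero =>
      have : m = 0 := by omega
      rw [this]
    | succ n ihn =>
      rcases Nat.lt_or_ge m (n+1) with h' | h'
      · exact (ihn (by omega) (by omega)).trans (hsub n hn)
      · have : m = n + 1 := by omega
        rw [this]
  have hW1 : ∀ n, n < N → W n ≠ 1 := by
    intro n hn hWn
    have hTn : T n = ∅ := by
      rw [hT]
      simp [hWn, alphT_one]
    have hT00 : T 0 = ∅ := Finset.subset_empty.1 (hTn ▸ hmono 0 n (by omega) hn)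
    have hW0 : W 0 = 1 := by
      apply alphT_eq_zero
      have h0 := hT00
      rw [hT] at h0
      rwa [Multiset.toFinset_eq_empty] at h0
    have hu0 : u = R 0 := by
      rw [hcopy 0 hN, hW0, mul_one]
    apply hs
    obtain ⟨N', rfl⟩ : ∃ N', N = N' + 1 := ⟨N - 1, by omega⟩
    rw [hR, List.range_succ_eq_map, List.map_cons, List.prod_cons, ← hu0]
    exact ⟨_, rfl⟩
  have hup : ∀ n, n < N → W n = u → W (N - 1) = u := by
    intro n hn hWn
    have key : ∀ d, n + d < N → W (n + d) = u := by
      intro d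
      induction d with
      | zero => intro _; simpa using hWn
      | succ d ihd =>
        intro hd
        have hWd : W (n + d) = u := ihd (by omega)
        have hR1 : alphT (R (n + d + 1)) = 0 := by
          by_contra h0
          obtain ⟨a, ha⟩ := Multiset.exists_mem_of_ne_zero h0
          have hau : a ∈ alphT u := by
            rw [← halph (n + d + 1) (by omega)]
            exact Multiset.mem_add.2 (Or.inl ha)
          have haW : a ∈ alphT (W (n + d)) := by rw [hWd]; exact hau
          exact hirr a (hind (n+d) (n+d+1) (by omega) (by omega) a ha a haW)
        have hc := hcopy (n + d + 1) (by omega)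
        rw [alphT_eq_zero hR1, one_mul] at hc
        have : n + (d + 1) = n + d + 1 := by omega
        rw [this]
        exact hc.symm
    have hfin := key (N - 1 - n) (by omega)
    rwa [show n + (N - 1 - n) = N - 1 by omega] at hfin
  have hstrict : ∀ n, n + 1 < N → T n ≠ T (n + 1) := by
    intro n hn heq
    have hIndRW : IndM I (alphT (R (n+1))) (alphT (W (n+1))) := by
      intro a ha b hb
      have hbT : b ∈ T (n+1) := by rw [hT]; exact Multiset.mem_toFinset.2 hb
      rw [← heq, hT, Multiset.mem_toFinset] at hbT
      exact hind n (n+1) (by omega) hn a ha b hbT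
    rcases hconn _ _ (hcopy (n+1) hn) (indM_traceIndep hIndRW) with hR1 | hW1'
    · have hWu : W (n+1) = u := by
        have hc := hcopy (n+1) hn
        rw [hR1, one_mul] at hc
        exact hc.symm
      have hlast := hup (n+1) hn hWu
      apply ht
      obtain ⟨N', rfl⟩ : ∃ N', N = N' + 1 := ⟨N - 1, by omega⟩
      refine ⟨((List.range N').map W).prod, ?_⟩
      rw [hW, List.range_succ, List.map_append, List.prod_append]
      simp only [List.map_cons, List.map_nil, List.prod_cons, List.prod_nil, mul_one]
      rw [show N' + 1 - 1 = N' from rfl] at hlast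
      rw [hlast]
    · exact hW1 (n+1) hn hW1'
  have hcard : ∀ n, n < N → n + 1 ≤ (T n).card := by
    intro n
    induction n with
    | zero =>
      intro h0
      have : T 0 ≠ ∅ := by
        intro hemp
        apply hW1 0 hN
        apply alphT_eq_zero
        rw [hT] at hemp
        rwa [Multiset.toFinset_eq_empty] at hemp
      have := Finset.card_pos.2 (Finset.nonempty_iff_ne_empty.2 this)
      omega
    | succ n ihn =>
      intro hn
      have h1 := ihn (by omega)
      have h2 : T n ⊂ T (n+1) := ssubset_of_subset_of_ne (hsub n hn) (hstrict n hn)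
      have := Finset.card_lt_card h2
      omega
  have hfin := hcard (N - 1) (by omega)
  have := Finset.card_le_univ (T (N - 1))
  have : (T (N-1)).card ≤ Fintype.card A := by
    simpa [Finset.card_univ] using this
  omega

/-- the two–factor lemma -/
lemma two_factor [Fintype A] (hirr : ∀ a, ¬ I a a) (hsym : ∀ a b, I a b → I b a)
    {u : Trace A I} (hu : u ≠ 1) (hconn : TraceConnected A I u)
    {a b : Trace A I} {N : ℕ} (h : a * b = u ^ N) :
    ∃ (k c l : ℕ) (s' t' : Trace A I),
      a = u ^ k * s' ∧ b = t' * u ^ l ∧ s' * t' = u ^ c ∧ c ≤ Fintype.card A ∧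
      N = k + c + l ∧ (¬ ∃ w, s' = u * w) := by
  obtain ⟨k, s', hks, hsmax⟩ := maxdiv_left hu a
  obtain ⟨l, t', hlt, htmax⟩ := maxdiv_right hu b
  have hL := lenT_pos hu
  have hlen : (k + l) * lenT u ≤ N * lenT u := by
    have := congrArg lenT h
    rw [lenT_mul, lenT_pow, hks, hlt, lenT_mul, lenT_mul, lenT_pow, lenT_pow] at this
    nlinarith
  have hkl : k + l ≤ N := Nat.le_of_mul_le_mul_right (by
    calc (k + l) * lenT u ≤ N * lenT u := hlen
    ) (by omega)
  set c := N - k - l with hc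
  have hNc : N = k + c + l := by omega
  have heq : s' * t' = u ^ c := by
    have h1 : u ^ k * (s' * (t' * u ^ l)) = u ^ k * ((u ^ c * u ^ l)) := by
      rw [← mul_assoc, ← hks, ← hlt, h, hNc, pow_add, pow_add, mul_assoc]
    have h2 := tcancel_left hirr hsym h1
    have h3 : (s' * t') * u ^ l = (u ^ c) * u ^ l := by
      rw [mul_assoc]; exact h2
    exact tcancel_right hirr hsym h3
  have hcb : c ≤ Fintype.card A := straddle_bound hirr hsym hu hconn heq hsmax (by
    rintro ⟨w, rfl⟩
    exact htmax ⟨w, rfl⟩)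
  exact ⟨k, c, l, s', t', hks, hlt, heq, hcb, hNc, hsmax⟩


/-! ### list helpers -/

lemma all_one_of_prod_one {l : List (Trace A I)} (h : l.prod = 1) : ∀ x ∈ l, x = 1 := by
  intro x hx
  apply alphT_eq_zero
  have h1 := alph_le_prod (I := I) hx
  rw [h, alphT_one] at h1
  exact Multiset.le_zero.1 h1

lemma pow_eq_one_exp {u : Trace A I} (hu : u ≠ 1) {X : ℕ} (h : u ^ X = 1) : X = 0 := by
  by_contra hX
  apply hu
  apply alphT_eq_zero
  have h1 := congrArg alphT h
  rw [alphT_pow, alphT_one] at h1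
  have hcard := congrArg Multiset.card h1
  rw [Multiset.card_nsmul, Multiset.card_zero] at hcard
  have : Multiset.card (alphT u) = 0 := by
    rcases Nat.mul_eq_zero.1 hcard with h0 | h0
    · exact absurd h0 hX
    · exact h0
  exact Multiset.card_eq_zero.1 this

lemma prod_take_drop {β : Type} [Monoid β] (l : List A) (f : A → β) (i : ℕ) :
    ((l.take i).map f).prod * ((l.drop i).map f).prod = (l.map f).prod := by
  rw [← List.prod_append, ← List.map_append, List.take_append_drop]

lemma finRange_drop_cons {m i : ℕ} (h : i < m) :
    (List.finRange m).drop i = ⟨i, h⟩ :: (List.finRange m).drop (i + 1) := by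
  have hlen : i < (List.finRange m).length := by rw [List.length_finRange]; exact h
  rw [List.drop_eq_getElem_cons hlen]
  congr 1
  have := List.getElem_finRange (n := m) (i := i) hlen
  simpa [List.get_eq_getElem] using this

lemma mem_drop_finRange_ge : ∀ {m n : ℕ} (k : Fin m), k ∈ (List.finRange m).drop n → n ≤ k.val := by
  intro m n
  induction n with
  | zero => intro k _; exact Nat.zero_le _
  | succ n ihn =>
    intro k hk
    rcases Nat.lt_or_ge n m with h | h
    · have hd := finRange_drop_cons (m := m) h
      have hnodup : ((List.finRange m).drop n).Nodup :=
        List.Nodup.sublist (List.drop_sublist n _) (List.nodup_finRange m)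
      have hk' : k ∈ (List.finRange m).drop n := by
        rw [hd]; exact List.mem_cons_of_mem _ hk
      have h1 := ihn k hk'
      have h2 : k ≠ ⟨n, h⟩ := by
        intro heq
        rw [hd] at hnodup
        exact (List.nodup_cons.1 hnodup).1 (heq ▸ hk)
      have : k.val ≠ n := fun hv => h2 (Fin.ext hv)
      omega
    · have hnil : (List.finRange m).drop (n+1) = [] := by
        apply List.drop_eq_nil_of_le
        rw [List.length_finRange]; omega
      rw [hnil] at hk
      cases hk

lemma mem_drop_finRange {m n : ℕ} (k : Fin m) (h : n ≤ k.val) :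
    k ∈ (List.finRange m).drop n := by
  induction n with
  | zero => simpa using List.mem_finRange k
  | succ n ihn =>
    have h1 : k ∈ (List.finRange m).drop n := ihn (by omega)
    have hnm : n < m := by omega
    rw [finRange_drop_cons hnm] at h1
    rcases List.mem_cons.1 h1 with heq | hmem
    · exfalso; have : k.val = n := by rw [heq]
      omega
    · exact hmem

lemma mem_take_finRange : ∀ {m i : ℕ} (k : Fin m), k ∈ (List.finRange m).take i → k.val < i := by
  intro m i k hk
  by_contra h
  push_neg at h
  have h1 : k ∈ (List.finRange m).drop i := mem_drop_finRange k h
  have hnodup := List.nodup_finRange m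
  rw [← List.take_append_drop i (List.finRange m), List.nodup_append] at hnodup
  exact hnodup.2.2 k hk k h1 rfl

lemma getD_map_finRange {β : Type} [Monoid β] {m : ℕ} (f : Fin m → β) {n : ℕ} (h : n < m) :
    ((List.finRange m).map f).getD n 1 = f ⟨n, h⟩ := by
  have hlen : n < ((List.finRange m).map f).length := by
    rw [List.length_map, List.length_finRange]; exact h
  rw [List.getD_eq_getElem _ _ hlen]
  rw [List.getElem_map]
  congr 1
  have hlen2 : n < (List.finRange m).length := by rw [List.length_finRange]; exact h
  have := List.getElem_finRange (n := m) (i := n) hlen2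
  simpa [List.get_eq_getElem] using this

lemma list_eq_map_finRange {β : Type} [Monoid β] {l : List β} {m : ℕ} (h : l.length = m) :
    l = (List.finRange m).map (fun j => l.getD j.val 1) := by
  apply List.ext_getElem
  · rw [List.length_map, List.length_finRange, h]
  · intro n h1 h2
    rw [List.getElem_map]
    have hlen2 : n < (List.finRange m).length := by rw [List.length_finRange]; omega
    have hfr : (List.finRange m)[n] = ⟨n, by omega⟩ := by
      have := List.getElem_finRange (n := m) (i := n) hlen2
      simpa [List.get_eq_getElem] using this
    rw [hfr, List.getD_eq_getElem _ _ (by omega : n < l.length)]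

/-- iterated Levi against a list of factors -/
lemma chain_levi (hirr : ∀ a, ¬ I a a) (hsym : ∀ a b, I a b → I b a) :
    ∀ (rs : List (Trace A I)) (a b T : Trace A I),
    a * b = rs.prod * T →
    ∃ (as ws : List (Trace A I)) (a' b' : Trace A I),
      as.length = rs.length ∧ ws.length = rs.length ∧
      (∀ n, rs.getD n 1 = as.getD n 1 * ws.getD n 1) ∧
      a = as.prod * a' ∧ b = ws.prod * b' ∧ a' * b' = T ∧
      (∀ n, IndM I (alphT (ws.getD n 1)) (alphT ((as.drop (n+1)).prod * a'))) := by
  intro rs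
  induction rs with
  | nil =>
    intro a b T h
    refine ⟨[], [], a, b, rfl, rfl, ?_, ?_, ?_, ?_, ?_⟩
    · intro n; simp
    · simp
    · simp
    · simpa using h
    · intro n
      simp only [List.getD_nil, alphT_one]
      intro p hp; cases hp
  | cons r rs' ih =>
    intro a b T h
    rw [List.prod_cons, mul_assoc] at h
    obtain ⟨ra, v, w, σ, h1, h2, h3, h4, h5⟩ := levi hirr hsym h
    obtain ⟨as', ws', a', b', hl1, hl2, hcomp, hv, hσ, hT, hind⟩ := ih v σ T h4.symm
    refine ⟨ra :: as', w :: ws', a', b', by simp [hl1], by simp [hl2], ?_, ?_, ?_, hT, ?_⟩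
    · intro n
      cases n with
      | zero => simpa using h2
      | succ n => simpa using hcomp n
    · rw [h1, hv, List.prod_cons, mul_assoc]
    · rw [h3, hσ, List.prod_cons, mul_assoc]
    · intro n
      cases n with
      | zero =>
        simp only [List.getD_cons_zero, List.drop_succ_cons, List.drop_zero]
        rw [← hv]
        exact (h5.symm hsym)
      | succ n =>
        simpa using hind n


/-! ### the main induction -/

lemma getD_mem_drop {β : Type} (l : List β) (dflt : β) {n j : ℕ}
    (hj : j < l.length) (hnj : n ≤ j) : l.getD j dflt ∈ l.drop n := by
  rw [List.getD_eq_getElem _ _ hj]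
  have h1 : j - n < (l.drop n).length := by rw [List.length_drop]; omega
  have h2 : (l.drop n)[j - n] = l[j] := by
    rw [List.getElem_drop]
    congr 1
    omega
  rw [← h2]
  exact List.getElem_mem _

lemma filter_ge_split {m i : ℕ} (h : i < m) :
    Finset.univ.filter (fun k : Fin m => i ≤ k.val)
      = insert ⟨i, h⟩ (Finset.univ.filter (fun k : Fin m => i + 1 ≤ k.val)) := by
  ext k
  simp only [Finset.mem_filter, Finset.mem_insert, Finset.mem_univ, true_and]
  constructor
  · intro hk
    rcases Nat.eq_or_lt_of_le hk with heq | hlt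
    · left; exact Fin.ext heq.symm
    · right; omega
  · rintro (rfl | hk)
    · exact le_rfl
    · omega

lemma step_main [Fintype A] (hirr : ∀ a, ¬ I a a) (hsym : ∀ a b, I a b → I b a)
    {u : Trace A I} (hu : u ≠ 1) (hconn : TraceConnected A I u)
    {m : ℕ} (y : Fin m → Trace A I) :
    ∀ (d i : ℕ), i + d = m → ∀ (r : Fin m → Trace A I) (X : ℕ),
    (∀ j : Fin m, i ≤ j.val → r j = 1) →
    (((List.finRange m).map r).prod * u ^ X = (((List.finRange m).drop i).map y).prod) →
    ∃ (p : Fin m → Fin m → Trace A I) (s : Fin m → Trace A I) (xs c : Fin m → ℕ),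
      (∀ k : Fin m, i ≤ k.val →
        y k = (((List.finRange m).take k.val).map (p k)).prod * u ^ xs k * s k) ∧
      (∀ j : Fin m, j.val < i →
        r j = (((List.finRange m).drop i).map (fun k => p k j)).prod) ∧
      (∀ j : Fin m, i ≤ j.val →
        s j * (((List.finRange m).drop (j.val + 1)).map (fun k => p k j)).prod = u ^ c j ∧
        c j ≤ Fintype.card A ∧ ¬ ∃ w, s j = u * w) ∧
      (X = (∑ k ∈ Finset.univ.filter (fun k : Fin m => i ≤ k.val), xs k)
         + ∑ k ∈ Finset.univ.filter (fun k : Fin m => i ≤ k.val), c k) ∧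
      (∀ i4 j4 k4 l4 : Fin m, j4 < l4 → l4 < k4 → k4 < i4 → i ≤ k4.val →
        IndM I (alphT (p i4 j4)) (alphT (p k4 l4))) ∧
      (∀ i4 j4 k4 : Fin m, j4 < k4 → k4 < i4 → i ≤ k4.val →
        IndM I (alphT (p i4 j4)) (alphT (u ^ xs k4 * s k4))) := by
  intro d
  induction d with
  | zero =>
    intro i hi r X hr heq
    have him : i = m := by omega
    rw [him] at hr heq ⊢
    have hdrop : (List.finRange m).drop m = [] := by
      apply List.drop_eq_nil_of_le
      rw [List.length_finRange]
    rw [hdrop] at heq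
    simp only [List.map_nil, List.prod_nil] at heq
    obtain ⟨hprod1, hpow1⟩ := mul_eq_one heq
    have hX : X = 0 := pow_eq_one_exp hu hpow1
    refine ⟨fun _ _ => 1, fun _ => 1, fun _ => 0, fun _ => 0, ?_, ?_, ?_, ?_, ?_, ?_⟩
    · intro k hk; exact absurd k.isLt (by omega)
    · intro j hj
      rw [hdrop]
      simp only [List.map_nil, List.prod_nil]
      exact all_one_of_prod_one hprod1 (r j)
        (List.mem_map.2 ⟨j, List.mem_finRange j, rfl⟩)
    · intro j hj; exact absurd j.isLt (by omega)
    · have hempty : Finset.univ.filter (fun k : Fin m => m ≤ k.val) = ∅ := by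
        apply Finset.eq_empty_of_forall_notMem
        intro k hk
        have := (Finset.mem_filter.1 hk).2
        have := k.isLt
        omega
      rw [hempty, Finset.sum_empty, hX]; rfl
    · intro i4 j4 k4 l4 _ _ _ hk4; exact absurd k4.isLt (by omega)
    · intro i4 j4 k4 _ _ hk4; exact absurd k4.isLt (by omega)
  | succ d ihd =>
    intro i hi r X hr heq
    have him : i < m := by omega
    set fi : Fin m := ⟨i, him⟩ with hfi
    have hfival : (fi : ℕ) = i := rfl
    -- split off factor y fi
    rw [finRange_drop_cons him, List.map_cons, List.prod_cons] at heq
    set Rest := (((List.finRange m).drop (i + 1)).map y).prod with hRestDef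
    -- chain Levi
    obtain ⟨as, ws, a', b', hlen1, hlen2, hcomp, hyfi, hRest, hab', hindc⟩ :=
      chain_levi hirr hsym ((List.finRange m).map r) (y fi) Rest (u ^ X) heq.symm
    rw [List.length_map, List.length_finRange] at hlen1 hlen2
    -- two-factor analysis of a' * b' = u ^ X
    obtain ⟨kk, cc, ll, σ, τ, hka', hb', hστ, hcle, hXsum, hσmax⟩ :=
      two_factor hirr hsym hu hconn hab'
    -- componentwise
    have hcompon : ∀ j : Fin m, r j = as.getD j.val 1 * ws.getD j.val 1 := by
      intro j
      have := hcomp j.val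
      rw [getD_map_finRange r j.isLt] at this
      simpa using this
    have htrail : ∀ n : ℕ, i ≤ n → as.getD n 1 = 1 ∧ ws.getD n 1 = 1 := by
      intro n hn
      rcases Nat.lt_or_ge n m with h | h
      · have h1 := hcompon ⟨n, h⟩
        rw [hr ⟨n, h⟩ hn] at h1
        exact mul_eq_one h1.symm
      · constructor
        · apply List.getD_eq_default; omega
        · apply List.getD_eq_default; omega
    -- new remainder function
    set r' : Fin m → Trace A I :=
      (fun j => if j.val < i then ws.getD j.val 1 else if j.val = i then τ else 1) with hr'def
    have hr'lt : ∀ j : Fin m, j.val < i → r' j = ws.getD j.val 1 := by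
      intro j hj; simp only [hr'def, if_pos hj]
    have hr'fi : r' fi = τ := by
      simp [hr'def, hfival]
    have hr'gt : ∀ j : Fin m, i + 1 ≤ j.val → r' j = 1 := by
      intro j hj
      simp only [hr'def]
      rw [if_neg (by omega), if_neg (by omega)]
    -- products
    have hws_prod : ws.prod
        = (((List.finRange m).take i).map (fun j => ws.getD j.val 1)).prod := by
      conv_lhs => rw [list_eq_map_finRange hlen2]
      rw [← prod_take_drop (List.finRange m) (fun j => ws.getD j.val 1) i]
      have : (((List.finRange m).drop i).map (fun j : Fin m => ws.getD j.val 1)).prod = 1 := by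
        apply List.prod_eq_one
        intro x hx
        obtain ⟨j, hj, rfl⟩ := List.mem_map.1 hx
        exact (htrail j.val (mem_drop_finRange_ge j hj)).2
      rw [this, mul_one]
    have has_prod : as.prod
        = (((List.finRange m).take i).map (fun j => as.getD j.val 1)).prod := by
      conv_lhs => rw [list_eq_map_finRange hlen1]
      rw [← prod_take_drop (List.finRange m) (fun j => as.getD j.val 1) i]
      have : (((List.finRange m).drop i).map (fun j : Fin m => as.getD j.val 1)).prod = 1 := by
        apply List.prod_eq_one
        intro x hx
        obtain ⟨j, hj, rfl⟩ := List.mem_map.1 hx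
        exact (htrail j.val (mem_drop_finRange_ge j hj)).1
      rw [this, mul_one]
    have hr'_prod : ((List.finRange m).map r').prod = ws.prod * τ := by
      rw [← prod_take_drop (List.finRange m) r' i, finRange_drop_cons him,
        List.map_cons, List.prod_cons]
      have h1 : (((List.finRange m).drop (i+1)).map r').prod = 1 := by
        apply List.prod_eq_one
        intro x hx
        obtain ⟨j, hj, rfl⟩ := List.mem_map.1 hx
        exact hr'gt j (mem_drop_finRange_ge j hj)
      have h2 : ((List.finRange m).take i).map r'
          = ((List.finRange m).take i).map (fun j => ws.getD j.val 1) := by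
        apply List.map_congr_left
        intro j hj
        exact hr'lt j (mem_take_finRange j hj)
      rw [h1, mul_one, h2, ← hws_prod]
      have : r' fi = τ := hr'fi
      rw [this]
    -- new equation
    have hrec_eq : ((List.finRange m).map r').prod * u ^ ll
        = (((List.finRange m).drop (i+1)).map y).prod := by
      rw [hr'_prod, ← hRestDef, hRest, hb', mul_assoc]
    obtain ⟨p', s', xs', c', hE1, hE2, hE3, hE4, hE5, hE6⟩ :=
      ihd (i + 1) (by omega) r' ll hr'gt hrec_eq
    -- construct extended data
    classical
    set pi : Fin m → Trace A I := fun j => if j.val < i then as.getD j.val 1 else 1 with hpidef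
    set p := Function.update p' fi pi with hpdef
    set s := Function.update s' fi σ with hsdef
    set xs := Function.update xs' fi kk with hxsdef
    set c := Function.update c' fi cc with hcdef
    have hpfi : p fi = pi := Function.update_self fi pi p'
    have hpne : ∀ k : Fin m, k ≠ fi → p k = p' k := fun k hk => Function.update_of_ne hk pi p'
    have hsfi : s fi = σ := Function.update_self fi σ s'
    have hsne : ∀ k : Fin m, k ≠ fi → s k = s' k := fun k hk => Function.update_of_ne hk σ s'
    have hxsfi : xs fi = kk := Function.update_self fi kk xs'
    have hxsne : ∀ k : Fin m, k ≠ fi → xs k = xs' k := fun k hk => Function.update_of_ne hk kk xs'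
    have hcfi : c fi = cc := Function.update_self fi cc c'
    have hcne : ∀ k : Fin m, k ≠ fi → c k = c' k := fun k hk => Function.update_of_ne hk cc c'
    have hne_of_gt : ∀ k : Fin m, i + 1 ≤ k.val → k ≠ fi := by
      intro k hk hkeq
      rw [hkeq] at hk
      simp only [hfi] at hk
      omega
    -- alph containment for recursive pieces
    have halph_p' : ∀ (j : Fin m), j.val < i + 1 → ∀ (i4 : Fin m), i + 1 ≤ i4.val →
        alphT (p' i4 j) ≤ alphT (r' j) := by
      intro j hj i4 hi4
      rw [hE2 j hj]
      exact alph_le_prod (List.mem_map.2 ⟨i4, mem_drop_finRange i4 hi4, rfl⟩)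
    refine ⟨p, s, xs, c, ?_, ?_, ?_, ?_, ?_, ?_⟩
    -- E1
    · intro k hk
      rcases Nat.eq_or_lt_of_le hk with hkeq | hkgt
      · -- k = fi
        have hkfi : k = fi := Fin.ext (by rw [hfival]; omega)
        rw [hkfi, hfival, hpfi, hsfi, hxsfi]
        have hmap : ((List.finRange m).take i).map pi
            = ((List.finRange m).take i).map (fun j => as.getD j.val 1) := by
          apply List.map_congr_left
          intro j hj
          have := mem_take_finRange j hj
          simp only [hpidef, if_pos this]
        rw [hmap, ← has_prod, hyfi, hka', mul_assoc]
      · -- k > i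
        have hkne : k ≠ fi := hne_of_gt k (by omega)
        have := hE1 k (by omega)
        rw [hpne k hkne, hsne k hkne, hxsne k hkne]
        exact this
    -- E2
    · intro j hj
      rw [finRange_drop_cons him, List.map_cons, List.prod_cons]
      have hmap : ((List.finRange m).drop (i+1)).map (fun k => p k j)
          = ((List.finRange m).drop (i+1)).map (fun k => p' k j) := by
        apply List.map_congr_left
        intro k hk
        rw [hpne k (hne_of_gt k (mem_drop_finRange_ge k hk))]
      rw [hmap, ← hE2 j (by omega), hr'lt j hj, hpfi]
      simp only [hpidef, if_pos hj]
      exact hcompon j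
    -- E3
    · intro j hj
      rcases Nat.eq_or_lt_of_le hj with hjeq | hjgt
      · have hjfi : j = fi := Fin.ext (by rw [hfival]; omega)
        rw [hjfi, hfival, hsfi, hcfi]
        have hmap : ((List.finRange m).drop (i+1)).map (fun k => p k fi)
            = ((List.finRange m).drop (i+1)).map (fun k => p' k fi) := by
          apply List.map_congr_left
          intro k hk
          have := mem_drop_finRange_ge k hk
          rw [hpne k (hne_of_gt k (by omega))]
        rw [hmap, ← hE2 fi (by rw [hfival]; omega), hr'fi]
        exact ⟨hστ, hcle, hσmax⟩

      · have hjne : j ≠ fi := hne_of_gt j (by omega)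
        have hmap : ((List.finRange m).drop (j.val+1)).map (fun k => p k j)
            = ((List.finRange m).drop (j.val+1)).map (fun k => p' k j) := by
          apply List.map_congr_left
          intro k hk
          have := mem_drop_finRange_ge k hk
          rw [hpne k (hne_of_gt k (by omega))]
        rw [hmap, hsne j hjne, hcne j hjne]
        exact hE3 j (by omega)
    -- E4
    · rw [filter_ge_split him]
      have hnotmem : fi ∉ Finset.univ.filter (fun k : Fin m => i + 1 ≤ k.val) := by
        intro hmem
        have := (Finset.mem_filter.1 hmem).2
        simp only [hfi] at this
        omega
      rw [Finset.sum_insert hnotmem, Finset.sum_insert hnotmem]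
      have hxsum : ∑ k ∈ Finset.univ.filter (fun k : Fin m => i + 1 ≤ k.val), xs k
          = ∑ k ∈ Finset.univ.filter (fun k : Fin m => i + 1 ≤ k.val), xs' k := by
        apply Finset.sum_congr rfl
        intro k hk
        exact hxsne k (hne_of_gt k (Finset.mem_filter.1 hk).2)
      have hcsum : ∑ k ∈ Finset.univ.filter (fun k : Fin m => i + 1 ≤ k.val), c k
          = ∑ k ∈ Finset.univ.filter (fun k : Fin m => i + 1 ≤ k.val), c' k := by
        apply Finset.sum_congr rfl
        intro k hk
        exact hcne k (hne_of_gt k (Finset.mem_filter.1 hk).2)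
      rw [hxsum, hcsum, hxsfi, hcfi]
      omega
    -- E5
    · intro i4 j4 k4 l4 hjl hlk hki hik
      rcases Nat.eq_or_lt_of_le hik with hkeq | hkgt
      · -- k4 = fi
        have hk4fi : k4 = fi := Fin.ext hkeq.symm
        have hl4 : l4.val < i := by
          have := hlk
          rw [Fin.lt_def] at this
          omega
        have hj4 : j4.val < i := by
          have := hjl
          rw [Fin.lt_def] at this
          omega
        have hi4 : i + 1 ≤ i4.val := by
          have := hki
          rw [Fin.lt_def, hk4fi] at this
          simp only [hfi] at this
          omega
        rw [hk4fi, hpfi]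
        simp only [hpidef, if_pos hl4]
        rw [hpne i4 (hne_of_gt i4 hi4)]
        have h1 : alphT (p' i4 j4) ≤ alphT (ws.getD j4.val 1) := by
          have := halph_p' j4 (by omega) i4 hi4
          rwa [hr'lt j4 hj4] at this
        have h2 : alphT (as.getD l4.val 1) ≤ alphT ((as.drop (j4.val + 1)).prod * a') := by
          have hmem : as.getD l4.val 1 ∈ as.drop (j4.val + 1) :=
            getD_mem_drop as 1 (by rw [hlen1]; exact l4.isLt)
              (by rw [Fin.lt_def] at hjl; omega)
          have hle := alph_le_prod (I := I) hmem
          rw [alphT_mul]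
          exact hle.trans (self_le_add_right _ _)
        exact (hindc j4.val).mono h1 h2
      · -- k4 > i: recursive case
        have hi4 : i + 1 ≤ i4.val := by
          have := hki
          rw [Fin.lt_def] at this
          omega
        rw [hpne i4 (hne_of_gt i4 hi4), hpne k4 (hne_of_gt k4 (by omega))]
        exact hE5 i4 j4 k4 l4 hjl hlk hki (by omega)
    -- E6
    · intro i4 j4 k4 hjk hki hik
      rcases Nat.eq_or_lt_of_le hik with hkeq | hkgt
      · have hk4fi : k4 = fi := Fin.ext hkeq.symm
        have hj4 : j4.val < i := by
          have := hjk
          rw [Fin.lt_def, hk4fi] at this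
          simpa [hfi] using this
        have hi4 : i + 1 ≤ i4.val := by
          have := hki
          rw [Fin.lt_def, hk4fi] at this
          simp only [hfi] at this
          omega
        rw [hk4fi, hxsfi, hsfi, hpne i4 (hne_of_gt i4 hi4)]
        have h1 : alphT (p' i4 j4) ≤ alphT (ws.getD j4.val 1) := by
          have := halph_p' j4 (by omega) i4 hi4
          rwa [hr'lt j4 hj4] at this
        have h2 : alphT (u ^ kk * σ) ≤ alphT ((as.drop (j4.val + 1)).prod * a') := by
          rw [← hka', alphT_mul]
          exact le_add_self
        exact (hindc j4.val).mono h1 h2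
      · have hi4 : i + 1 ≤ i4.val := by
          have := hki
          rw [Fin.lt_def] at this
          omega
        rw [hpne i4 (hne_of_gt i4 hi4), hxsne k4 (hne_of_gt k4 (by omega)),
          hsne k4 (hne_of_gt k4 (by omega))]
        exact hE6 i4 j4 k4 hjk hki (by omega)

end TraceWork

open TraceWork in
/-- Factorizations of a power of a connected trace into m factors. -/
theorem power_factorization_many (A : Type) [Fintype A] (I : A → A → Prop)
    (hirr : ∀ a, ¬ I a a) (hsym : ∀ a b, I a b → I b a)
    (u : Trace A I) (hu : u ≠ 1) (hconn : TraceConnected A I u)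
    (m : ℕ) (hm : 2 ≤ m) (x : ℕ) (y : Fin m → Trace A I)
    (h : u ^ x = (List.ofFn y).prod) :
    ∃ (p : Fin m → Fin m → Trace A I) (s : Fin m → Trace A I)
      (xs : Fin m → ℕ) (c : Fin m → ℕ),
      (∀ i : Fin m,
        y i = (((List.finRange m).take i.val).map (p i)).prod * u ^ xs i * s i) ∧
      (∀ i j k l : Fin m, j < l → l < k → k < i → TraceIndep A I (p i j) (p k l)) ∧
      (∀ i j k : Fin m, j < k → k < i → TraceIndep A I (p i j) (u ^ xs k * s k)) ∧
      s ⟨m - 1, by omega⟩ = 1 ∧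
      (∀ j : Fin m, j.val < m - 1 →
        s j * (((List.finRange m).drop (j.val + 1)).map (fun i => p i j)).prod = u ^ c j ∧
        c j ≤ Fintype.card A) ∧
      x = (∑ i : Fin m, xs i) + ∑ j ∈ Finset.univ.filter (fun j : Fin m => j.val < m - 1), c j := by
  classical
  have h' : ((List.finRange m).map (fun _ : Fin m => (1 : Trace A I))).prod * u ^ x
      = (((List.finRange m).drop 0).map y).prod := by
    have h1 : ((List.finRange m).map (fun _ : Fin m => (1 : Trace A I))).prod = 1 := by
      apply List.prod_eq_one
      intro z hz
      obtain ⟨j, _, rfl⟩ := List.mem_map.1 hz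
      rfl
    rw [List.drop_zero, h1, one_mul, ← List.ofFn_eq_map, ← h]
  obtain ⟨p, s, xs, c, hE1, hE2, hE3, hE4, hE5, hE6⟩ :=
    step_main hirr hsym hu hconn y m 0 (by omega) (fun _ => 1) x (fun _ _ => rfl) h'
  set fml : Fin m := ⟨m - 1, by omega⟩ with hfml
  have hfmlval : (fml : ℕ) = m - 1 := rfl
  have hlast := hE3 fml (Nat.zero_le _)
  have hdropnil : (List.finRange m).drop (fml.val + 1) = [] := by
    apply List.drop_eq_nil_of_le
    rw [List.length_finRange, hfmlval]
    omega
  have hsml : s fml = u ^ c fml := by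
    rw [hdropnil] at hlast
    have h1 := hlast.1
    simpa using h1
  have hcml : c fml = 0 := by
    by_contra h0
    apply hlast.2.2
    refine ⟨u ^ (c fml - 1), ?_⟩
    rw [hsml, ← pow_succ']
    congr 1
    omega
  have hsml1 : s fml = 1 := by rw [hsml, hcml, pow_zero]
  refine ⟨p, s, xs, c, ?_, ?_, ?_, ?_, ?_, ?_⟩
  · intro i
    exact hE1 i (Nat.zero_le _)
  · intro i j k l h1 h2 h3
    exact indM_traceIndep (hE5 i j k l h1 h2 h3 (Nat.zero_le _))
  · intro i j k h1 h2
    exact indM_traceIndep (hE6 i j k h1 h2 (Nat.zero_le _))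
  · exact hsml1
  · intro j hj
    have := hE3 j (Nat.zero_le _)
    exact ⟨this.1, this.2.1⟩
  · have hfilter0 : Finset.univ.filter (fun k : Fin m => 0 ≤ k.val) = Finset.univ := by
      apply Finset.filter_true_of_mem
      intro k _
      exact Nat.zero_le _
    rw [hfilter0] at hE4
    have hsplit : ∑ k : Fin m, c k
        = (∑ k ∈ Finset.univ.filter (fun j : Fin m => j.val < m - 1), c k)
          + ∑ k ∈ Finset.univ.filter (fun j : Fin m => ¬ j.val < m - 1), c k :=
      (Finset.sum_filter_add_sum_filter_not _ _ _).symm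
    have hsingle : Finset.univ.filter (fun j : Fin m => ¬ j.val < m - 1) = {fml} := by
      ext k
      simp only [Finset.mem_filter, Finset.mem_singleton, Finset.mem_univ, true_and, not_lt]
      constructor
      · intro hk
        apply Fin.ext
        rw [hfmlval]
        have := k.isLt
        omega
      · intro hk
        rw [hk, hfmlval]
    rw [hsingle, Finset.sum_singleton, hcml, add_zero] at hsplit
    rw [hE4, hsplit]
end

section
/- Let A₁ and A₂ be I-diamond NFAs over alphabet A with n₁ and n₂ states respectively, and suppose A₂ is memorizing. Then there exists an I-diamond NFA with n₁·n₂ states accepting the partially commutative closure [L(A₁)L(A₂)]_I. -/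
/-- A nondeterministic finite automaton with a single initial state. -/
structure NFA' (Q A : Type) where
  Δ : Q → A → Q → Prop
  q0 : Q
  F : Set Q

/-- `M.Reaches p w q`: the automaton can go from state p to state q reading w. -/
def NFA'.Reaches {Q A : Type} (M : NFA' Q A) : Q → List A → Q → Prop
  | p, [], q => p = q
  | p, a :: w, q => ∃ r, M.Δ p a r ∧ M.Reaches r w q

/-- The language accepted by the NFA. -/
def NFA'.lang {Q A : Type} (M : NFA' Q A) : Set (List A) :=
  {w | ∃ q ∈ M.F, M.Reaches M.q0 w q}

/-- An I-diamond NFA. -/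
def IDiamond {Q A : Type} (I : A → A → Prop) (M : NFA' Q A) : Prop :=
  ∀ a b p q r, I a b → M.Δ p a q → M.Δ q b r → ∃ q', M.Δ p b q' ∧ M.Δ q' a r

/-- A memorizing NFA: every state is reachable and determines the alphabet of
the words reaching it. -/
def Memorizing {Q A : Type} (M : NFA' Q A) : Prop :=
  (∀ q : Q, ∃ w, M.Reaches M.q0 w q) ∧
  ∃ α : Q → Set A, ∀ (w : List A) (q : Q), M.Reaches M.q0 w q → α q = {a | a ∈ w}

/-- The partially commutative closure of a language. -/
def pcClosure (A : Type) (I : A → A → Prop) (L : Set (List A)) : Set (List A) :=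
  {u | ∃ v ∈ L, traceCon A I (FreeMonoid.ofList u) (FreeMonoid.ofList v)}

section Aux

variable {Q A : Type}

lemma NFA'.reaches_append (M : NFA' Q A) (u v : List A) (p q : Q) :
    M.Reaches p (u ++ v) q ↔ ∃ r, M.Reaches p u r ∧ M.Reaches r v q := by
  induction u generalizing p with
  | nil =>
    show M.Reaches p v q ↔ ∃ r, p = r ∧ M.Reaches r v q
    constructor
    · intro h; exact ⟨p, rfl, h⟩
    · rintro ⟨r, rfl, h⟩; exact h
  | cons a u ih =>
    show (∃ r, M.Δ p a r ∧ M.Reaches r (u ++ v) q) ↔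
      ∃ s, (∃ r, M.Δ p a r ∧ M.Reaches r u s) ∧ M.Reaches s v q
    constructor
    · rintro ⟨r, hr, h⟩
      obtain ⟨s, h1, h2⟩ := (ih r).mp h
      exact ⟨s, ⟨r, hr, h1⟩, h2⟩
    · rintro ⟨s, ⟨r, hr, h1⟩, h2⟩
      exact ⟨r, hr, (ih r).mpr ⟨s, h1, h2⟩⟩

/-- The congruence of "same reachability" in an automaton. -/
def reachCon (M : NFA' Q A) : Con (FreeMonoid A) where
  r x y := ∀ p q, M.Reaches p x.toList q ↔ M.Reaches p y.toList q
  iseqv := ⟨fun _ _ _ => Iff.rfl, fun h p q => (h p q).symm,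
      fun h h' p q => (h p q).trans (h' p q)⟩
  mul' := by
    intro w x y z h h' p q
    show M.Reaches p ((w * y).toList) q ↔ M.Reaches p ((x * z).toList) q
    rw [FreeMonoid.toList_mul, FreeMonoid.toList_mul,
      M.reaches_append, M.reaches_append]
    exact exists_congr fun r => and_congr (h p r) (h' r q)

lemma reaches_swap {I : A → A → Prop} {M : NFA' Q A} (hM : IDiamond I M)
    {a b : A} (hab : I a b) (p q : Q)
    (h : M.Reaches p [a, b] q) : M.Reaches p [b, a] q := by
  obtain ⟨r, hr, s, hs, rfl⟩ := h
  obtain ⟨q', h1, h2⟩ := hM a b p r s hab hr hs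
  exact ⟨q', h1, s, h2, rfl⟩

lemma traceCon_le_reachCon {I : A → A → Prop} (hsym : ∀ a b, I a b → I b a)
    {M : NFA' Q A} (hM : IDiamond I M) : traceCon A I ≤ reachCon M := by
  apply Con.conGen_le.mpr
  rintro x y ⟨a, b, hab, rfl, rfl⟩ p q
  exact ⟨fun h => reaches_swap hM hab p q h, fun h => reaches_swap hM (hsym a b hab) p q h⟩

lemma trace_swap_word {I : A → A → Prop} (hsym : ∀ a b, I a b → I b a)
    (a : A) (v : List A) (h : ∀ b ∈ v, I a b) :
    traceCon A I (FreeMonoid.ofList (a :: v)) (FreeMonoid.ofList (v ++ [a])) := by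
  induction v with
  | nil => exact (traceCon A I).refl _
  | cons c v ih =>
    have h1 : traceCon A I (FreeMonoid.ofList (a :: c :: v)) (FreeMonoid.ofList (c :: a :: v)) := by
      have hs : traceCon A I (FreeMonoid.of a * FreeMonoid.of c) (FreeMonoid.of c * FreeMonoid.of a) :=
        ConGen.Rel.of _ _ ⟨a, c, h c List.mem_cons_self, rfl, rfl⟩
      exact (traceCon A I).mul hs ((traceCon A I).refl (FreeMonoid.ofList v))
    have h2 : traceCon A I (FreeMonoid.ofList (c :: a :: v)) (FreeMonoid.ofList (c :: (v ++ [a]))) :=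
      (traceCon A I).mul ((traceCon A I).refl (FreeMonoid.of c))
        (ih fun b hb => h b (List.mem_cons_of_mem _ hb))
    exact (traceCon A I).trans h1 h2

end Aux

/-- The closure of the product of an I-diamond language with a memorizing
I-diamond language is accepted by an I-diamond NFA with n₁·n₂ states. -/
theorem idiamond_product (A Q₁ Q₂ : Type) [Fintype A] [Fintype Q₁] [Fintype Q₂]
    (I : A → A → Prop) (hirr : ∀ a, ¬ I a a) (hsym : ∀ a b, I a b → I b a)
    (M₁ : NFA' Q₁ A) (M₂ : NFA' Q₂ A)
    (h₁ : IDiamond I M₁) (h₂ : IDiamond I M₂) (hmem : Memorizing M₂) :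
    ∃ M : NFA' (Q₁ × Q₂) A, IDiamond I M ∧
      M.lang = pcClosure A I {w | ∃ u ∈ M₁.lang, ∃ v ∈ M₂.lang, w = u ++ v} := by
  obtain ⟨hreach, α, hα⟩ := hmem
  set M : NFA' (Q₁ × Q₂) A :=
    ⟨fun s a t => (M₁.Δ s.1 a t.1 ∧ t.2 = s.2 ∧ ∀ b ∈ α s.2, I a b) ∨
        (M₂.Δ s.2 a t.2 ∧ t.1 = s.1),
      (M₁.q0, M₂.q0), {s | s.1 ∈ M₁.F ∧ s.2 ∈ M₂.F}⟩ with hMdef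
  have hα_step : ∀ (q q' : Q₂) (b : A), M₂.Δ q b q' → α q' = α q ∪ {b} := by
    intro q q' b hb
    obtain ⟨w, hw⟩ := hreach q
    have hw' : M₂.Reaches M₂.q0 (w ++ [b]) q' := by
      rw [M₂.reaches_append]; exact ⟨q, hw, q', hb, rfl⟩
    rw [hα w q hw, hα (w ++ [b]) q' hw']
    ext c
    simp only [Set.mem_setOf_eq, List.mem_append, List.mem_singleton, Set.mem_union,
      Set.mem_singleton_iff]
  have hdia : IDiamond I M := by
    rintro a b s t r hab h1 h2
    rcases h1 with ⟨ha, hq, hIa⟩ | ⟨ha, hp⟩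
    · rcases h2 with ⟨hb, hq', hIb⟩ | ⟨hb, hp'⟩
      · -- both in M₁
        obtain ⟨m, hm1, hm2⟩ := h₁ a b s.1 t.1 r.1 hab ha hb
        rw [hq] at hIb
        exact ⟨(m, s.2), Or.inl ⟨hm1, rfl, hIb⟩,
          Or.inl ⟨hm2, hq'.trans hq, hIa⟩⟩
      · -- M₁ then M₂
        rw [hq] at hb
        refine ⟨(s.1, r.2), Or.inr ⟨hb, rfl⟩, Or.inl ⟨hp'.symm ▸ ha, rfl, ?_⟩⟩
        rw [hα_step s.2 r.2 b hb]
        rintro c (hc | rfl)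
        · exact hIa c hc
        · exact hab
    · rcases h2 with ⟨hb, hq', hIb⟩ | ⟨hb, hp'⟩
      · -- M₂ then M₁
        rw [hp] at hb
        refine ⟨(r.1, s.2), Or.inl ⟨hb, rfl, ?_⟩, Or.inr ⟨hq'.symm ▸ ha, rfl⟩⟩
        intro c hc
        exact hIb c (by rw [hα_step s.2 t.2 a ha]; exact Or.inl hc)
      · -- both in M₂
        obtain ⟨m, hm1, hm2⟩ := h₂ a b s.2 t.2 r.2 hab ha hb
        exact ⟨(s.1, m), Or.inr ⟨hm1, rfl⟩, Or.inr ⟨hm2, hp'.trans hp⟩⟩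
  refine ⟨M, hdia, ?_⟩
  have hα0 : α M₂.q0 = ∅ := by
    rw [hα [] M₂.q0 rfl]
    ext c; simp
  have lift1 : ∀ (u : List A) (p p' : Q₁),
      M₁.Reaches p u p' → M.Reaches (p, M₂.q0) u (p', M₂.q0) := by
    intro u
    induction u with
    | nil =>
      intro p p' h
      exact congrArg (fun x => (x, M₂.q0)) h
    | cons a u ih =>
      rintro p p' ⟨r, hr, h⟩
      exact ⟨(r, M₂.q0), Or.inl ⟨hr, rfl, by rw [hα0]; intro b hb; cases hb⟩, ih r p' h⟩
  have lift2 : ∀ (v : List A) (p : Q₁) (q q' : Q₂),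
      M₂.Reaches q v q' → M.Reaches (p, q) v (p, q') := by
    intro v
    induction v with
    | nil =>
      intro p q q' h
      exact congrArg (fun x => (p, x)) h
    | cons a v ih =>
      rintro p q q' ⟨r, hr, h⟩
      exact ⟨(p, r), Or.inr ⟨hr, rfl⟩, ih p r q' h⟩
  have key : ∀ (w : List A) (s : Q₁ × Q₂), M.Reaches M.q0 w s →
      ∃ u v : List A, M₁.Reaches M₁.q0 u s.1 ∧ M₂.Reaches M₂.q0 v s.2 ∧
        traceCon A I (FreeMonoid.ofList w) (FreeMonoid.ofList (u ++ v)) := by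
    intro w
    induction w using List.reverseRecOn with
    | nil =>
      rintro s (rfl : M.q0 = s)
      exact ⟨[], [], rfl, rfl, (traceCon A I).refl _⟩
    | append_singleton w a ih =>
      intro s hs
      rw [M.reaches_append] at hs
      obtain ⟨t, hwt, r, hr, rfl⟩ := hs
      obtain ⟨u, v, hu, hv, hw⟩ := ih t hwt
      rcases hr with ⟨ha, hq, hIa⟩ | ⟨ha, hp⟩
      · -- a done in M₁: commute a before v
        have hIv : ∀ b ∈ v, I a b := by
          intro b hb
          exact hIa b (by rw [hα v t.2 hv]; exact hb)
        refine ⟨u ++ [a], v, ?_, ?_, ?_⟩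
        · rw [M₁.reaches_append]; exact ⟨t.1, hu, r.1, ha, rfl⟩
        · rw [hq]; exact hv
        · have step1 : traceCon A I (FreeMonoid.ofList (w ++ [a]))
              (FreeMonoid.ofList ((u ++ v) ++ [a])) :=
            (traceCon A I).mul hw ((traceCon A I).refl (FreeMonoid.ofList [a]))
          have step2 : traceCon A I (FreeMonoid.ofList (u ++ (v ++ [a])))
              (FreeMonoid.ofList (u ++ (a :: v))) :=
            (traceCon A I).mul ((traceCon A I).refl (FreeMonoid.ofList u))
              ((traceCon A I).symm (trace_swap_word hsym a v hIv))
          have e1 : FreeMonoid.ofList ((u ++ v) ++ [a]) =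
              FreeMonoid.ofList (u ++ (v ++ [a])) := by rw [List.append_assoc]
          have e2 : FreeMonoid.ofList (u ++ (a :: v)) =
              FreeMonoid.ofList ((u ++ [a]) ++ v) := by
            rw [List.append_assoc]; rfl
          exact (traceCon A I).trans step1 (e1 ▸ e2 ▸ step2)
      · -- a done in M₂
        refine ⟨u, v ++ [a], by rw [hp]; exact hu, ?_, ?_⟩
        · rw [M₂.reaches_append]; exact ⟨t.2, hv, r.2, ha, rfl⟩
        · have e : FreeMonoid.ofList (u ++ (v ++ [a])) =
              FreeMonoid.ofList ((u ++ v) ++ [a]) := by rw [List.append_assoc]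
          rw [e]
          exact (traceCon A I).mul hw ((traceCon A I).refl (FreeMonoid.ofList [a]))
  ext w
  constructor
  · rintro ⟨s, ⟨hF1, hF2⟩, hrw⟩
    obtain ⟨u, v, hu, hv, hw⟩ := key w s hrw
    exact ⟨u ++ v, ⟨u, ⟨s.1, hF1, hu⟩, v, ⟨s.2, hF2, hv⟩, rfl⟩, hw⟩
  · rintro ⟨x, ⟨u, ⟨p, hpF, hu⟩, v, ⟨q, hqF, hv⟩, rfl⟩, hwx⟩
    have huv : M.Reaches M.q0 (u ++ v) (p, q) := by
      rw [M.reaches_append]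
      exact ⟨(p, M₂.q0), lift1 u M₁.q0 p hu, lift2 v p M₂.q0 q hv⟩
    refine ⟨(p, q), ⟨hpF, hqF⟩, ?_⟩
    exact (traceCon_le_reachCon hsym hdia hwx M.q0 (p, q)).mpr huv
end
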